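/- arXiv:1510.07428 — 5 statements merged into one kernel-verified Lean document; each statement's English description precedes it below -/
import Mathlib

section
/- For every K>0 and every ε>0 there exists s₀ ∈ ℕ such that for all integers s ≥ s₀ there is a set H ⊆ {1,…,s}² with |H| ≥ s² − K·s such that every connected component of the subgraph of the king's move grid K_s induced by H has at most (a(K)+ε)·s² vertices, where a(K) = 1/(⌊K⌋+1) if K > 1 and a(K) = 1 − (K/2)² if K ≤ 1. In particular, 0 < a(K) < 1 for all K > 0 and a(K) → 0 as K → ∞. -/
open Filter Topology

noncomputable section

/-- The king's move grid on `ℤ²`: two distinct lattice points are adjacent iff their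
Euclidean distance is at most `√2`. -/
def kingGraph : SimpleGraph (ℤ × ℤ) where
  Adj p q := p ≠ q ∧
    Real.sqrt (((p.1 - q.1 : ℤ) : ℝ)^2 + ((p.2 - q.2 : ℤ) : ℝ)^2) ≤ Real.sqrt 2
  symm := by
    constructor
    intro p q h
    refine ⟨h.1.symm, ?_⟩
    have : (((q.1 - p.1 : ℤ) : ℝ)^2 + ((q.2 - p.2 : ℤ) : ℝ)^2)
        = (((p.1 - q.1 : ℤ) : ℝ)^2 + ((p.2 - q.2 : ℤ) : ℝ)^2) := by push_cast; ring
    rw [this]; exact h.2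
  loopless := by constructor; intro p h; exact h.1 rfl

/-- The vertex set `{1,…,s}²` of the `s × s` grid, as a subset of `ℤ²`. -/
def gridBox (s : ℕ) : Set (ℤ × ℤ) := Set.Icc (1 : ℤ) s ×ˢ Set.Icc (1 : ℤ) s

/-- The function `a(K)` from the barrier lemma: `a(K) = 1/(⌊K⌋+1)` if `K > 1`, and
`a(K) = 1 − (K/2)²` if `K ≤ 1`. -/
def aFun (K : ℝ) : ℝ := if 1 < K then 1 / ((⌊K⌋ : ℝ) + 1) else 1 - (K / 2)^2

lemma reach_inv {V β : Type*} {G : SimpleGraph V} (f : V → β)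
    (hf : ∀ a b, G.Adj a b → f a = f b) {u v : V} (h : G.Reachable u v) : f u = f v := by
  obtain ⟨w⟩ := h
  induction w with
  | nil => rfl
  | cons h p ih => exact (hf _ _ h).trans ih

lemma comp_card_le {V : Type*} {G : SimpleGraph V} (H : Set V) (T : Finset V)
    (v : H) (hT : ∀ w : H, (G.induce H).Reachable v w → (w : V) ∈ T) :
    Nat.card {w : H // (G.induce H).Reachable v w} ≤ T.card := by
  have hinj : Function.Injective (fun w : {w : H // (G.induce H).Reachable v w} =>
      (⟨(w.1 : V), hT w.1 w.2⟩ : T)) := by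
    intro a b hab
    apply Subtype.ext; apply Subtype.ext
    simpa using hab
  calc Nat.card {w : H // (G.induce H).Reachable v w} ≤ Nat.card T :=
        Nat.card_le_card_of_injective _ hinj
    _ = T.card := Nat.card_eq_finsetCard T

lemma int_abs_le_one_of_sq {a : ℤ} (h : a^2 ≤ 2) : a ≤ 1 ∧ -1 ≤ a := by
  constructor <;> nlinarith [sq_nonneg (a-1), sq_nonneg (a+1)]

lemma king_adj_coords {p q : ℤ × ℤ} (h : kingGraph.Adj p q) :
    (p.1 - q.1)^2 + (p.2 - q.2)^2 ≤ 2 := by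
  have h2 := h.2
  have h0 : (0:ℝ) ≤ ((p.1 - q.1 : ℤ) : ℝ)^2 + ((p.2 - q.2 : ℤ) : ℝ)^2 := by positivity
  have := (Real.sqrt_le_sqrt_iff (y := 2) (by norm_num)).mp h2
  exact_mod_cast this

lemma king_adj_coords' {p q : ℤ × ℤ} (h : kingGraph.Adj p q) :
    p.1 - q.1 ≤ 1 ∧ q.1 - p.1 ≤ 1 ∧ p.2 - q.2 ≤ 1 ∧ q.2 - p.2 ≤ 1 := by
  have hc := king_adj_coords h
  have h1 := int_abs_le_one_of_sq (a := p.1 - q.1) (by nlinarith [sq_nonneg (p.2 - q.2)])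
  have h2 := int_abs_le_one_of_sq (a := p.2 - q.2) (by nlinarith [sq_nonneg (p.1 - q.1)])
  refine ⟨h1.1, by linarith [h1.2], h2.1, by linarith [h2.2]⟩

lemma strip_eq {d y z : ℤ} (hd : 0 < d) (hy : ¬ d ∣ y) (hz : ¬ d ∣ z)
    (h1 : y - z ≤ 1) (h2 : z - y ≤ 1) : y / d = z / d := by
  have key : ∀ a : ℤ, ¬ d ∣ a → ¬ d ∣ (a+1) → (a+1)/d = a/d := by
    intro a ha ha1
    have hmod : 0 ≤ a % d := Int.emod_nonneg a hd.ne'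
    have hmod' : a % d < d := Int.emod_lt_of_pos a hd
    have hne : a % d ≠ 0 := fun hh => ha (Int.dvd_of_emod_eq_zero hh)
    have hstep : a % d + 1 < d := by
      rcases lt_or_eq_of_le (Int.add_one_le_iff.mpr hmod') with h | h
      · exact h
      · exfalso
        apply ha1
        have : a + 1 = d * (a/d) + (a % d + 1) := by
          have := Int.mul_ediv_add_emod a d
          linarith
        rw [this, h]
        exact ⟨a/d + 1, by ring⟩
    have : a + 1 = (a % d + 1) + (a/d) * d := by
      have := Int.mul_ediv_add_emod a d
      linarith
    rw [this, Int.add_mul_ediv_right _ _ hd.ne',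
      Int.ediv_eq_zero_of_lt (by linarith) hstep, zero_add]
  rcases lt_trichotomy y z with h | h | h
  · have : z = y + 1 := by omega
    subst this
    exact (key y hy hz).symm
  · rw [h]
  · have : y = z + 1 := by omega
    subst this
    exact key z hz hy

lemma mult_card {s m : ℕ} (d : ℕ) (hd : 0 < d) (hsd : (s:ℤ) < (m+1) * d) :
    ((Finset.Icc (1:ℤ) s).filter (fun y => (d:ℤ) ∣ y)).card ≤ m := by
  have := Finset.card_le_card_of_injOn (fun y => y / (d:ℤ))
    (s := (Finset.Icc (1:ℤ) s).filter (fun y => (d:ℤ) ∣ y)) (t := Finset.Icc (1:ℤ) m)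
    ?_ ?_
  · simpa using this
  · intro y hy
    simp only [Finset.mem_coe, Finset.mem_filter, Finset.mem_Icc] at hy ⊢
    obtain ⟨⟨hy1, hy2⟩, k, rfl⟩ := hy
    have hd' : (0:ℤ) < d := by exact_mod_cast hd
    rw [Int.mul_ediv_cancel_left _ hd'.ne']
    constructor
    · by_contra hk
      push_neg at hk
      nlinarith
    · by_contra hk
      push_neg at hk
      have : (m+1 : ℤ) ≤ k := by omega
      nlinarith
  · intro a ha b hb hab
    simp only [Finset.mem_coe, Finset.mem_filter] at ha hb
    have ha' := Int.ediv_mul_cancel ha.2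
    have hb' := Int.ediv_mul_cancel hb.2
    simp only at hab
    rw [← ha', ← hb', hab]


set_option maxHeartbeats 2000000 in
/-- barrier lemma. For every `K > 0` and `ε > 0`, for all sufficiently
large `s` there is a set `H ⊆ {1,…,s}²` with `|H| ≥ s² − K·s` all of whose connected
components in the king's move grid have at most `(a(K)+ε)·s²` vertices. Moreover
`0 < a(K) < 1` for all `K > 0` and `a(K) → 0` as `K → ∞`. -/
theorem barrier_lemma :
    (∀ K : ℝ, 0 < K → ∀ ε : ℝ, 0 < ε → ∃ s₀ : ℕ, ∀ s : ℕ, s₀ ≤ s →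
      ∃ H : Set (ℤ × ℤ), H ⊆ gridBox s ∧ (s : ℝ)^2 - K * s ≤ (H.ncard : ℝ) ∧
        ∀ v : H, (Nat.card {w : H // (SimpleGraph.induce H kingGraph).Reachable v w} : ℝ)
          ≤ (aFun K + ε) * (s : ℝ)^2) ∧
    (∀ K : ℝ, 0 < K → 0 < aFun K ∧ aFun K < 1) ∧
    Tendsto aFun atTop (nhds 0) := by
  refine ⟨?_, ?_, ?_⟩
  · -- main part
    intro K hK ε hε
    refine ⟨⌈2/K⌉₊ + ⌈K/ε⌉₊ + 1, fun s hs => ?_⟩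
    have hs0 : 0 < s := by omega
    have hsR : (0:ℝ) < s := by exact_mod_cast hs0
    by_cases hK1 : 1 < K
    · -- K > 1 : remove horizontal rows
      set m := ⌊K⌋.toNat with hm
      have hfloor : (1:ℤ) ≤ ⌊K⌋ := Int.le_floor.mpr (by exact_mod_cast hK1.le)
      have hmZ : (m : ℤ) = ⌊K⌋ := Int.toNat_of_nonneg (by omega)
      have hmcast : (m:ℝ) = (⌊K⌋:ℝ) := by exact_mod_cast congrArg (fun z : ℤ => (z:ℝ)) hmZ
      have hmK : (m:ℝ) ≤ K := hmcast ▸ Int.floor_le K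
      have hm1 : 1 ≤ m := by omega
      set d : ℕ := s/(m+1) + 1 with hd
      have hd0 : 0 < d := Nat.succ_pos _
      have hdZ : (0:ℤ) < (d:ℤ) := by exact_mod_cast hd0
      have hsd : s < (m+1) * d := by
        have h1 := Nat.div_add_mod s (m+1)
        have h2 : s % (m+1) < m+1 := Nat.mod_lt _ (Nat.succ_pos m)
        calc s = (m+1) * (s/(m+1)) + s % (m+1) := h1.symm
          _ < (m+1) * (s/(m+1)) + (m+1) := by omega
          _ = (m+1) * d := by rw [hd]; ring
      set Hfin : Finset (ℤ×ℤ) :=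
        Finset.Icc (1:ℤ) s ×ˢ ((Finset.Icc (1:ℤ) s).filter (fun y => ¬ (d:ℤ) ∣ y)) with hH
      have memH : ∀ p : ℤ × ℤ, p ∈ Hfin ↔
          (1 ≤ p.1 ∧ p.1 ≤ s) ∧ (1 ≤ p.2 ∧ p.2 ≤ s) ∧ ¬ (d:ℤ) ∣ p.2 := by
        intro p
        simp [hH, Finset.mem_product, Finset.mem_filter, Finset.mem_Icc, and_assoc]
      have hcardIcc : (Finset.Icc (1:ℤ) s).card = s := by
        rw [Int.card_Icc]; omega
      refine ⟨↑Hfin, ?_, ?_, ?_⟩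
      · intro p hp
        rw [Finset.mem_coe, memH] at hp
        exact ⟨⟨hp.1.1, hp.1.2⟩, ⟨hp.2.1.1, hp.2.1.2⟩⟩
      · -- cardinality
        rw [Set.ncard_coe_finset]
        set c := ((Finset.Icc (1:ℤ) s).filter (fun y => (d:ℤ) ∣ y)).card with hc
        have hcm : c ≤ m := mult_card d hd0 (by exact_mod_cast hsd)
        have hcs : c ≤ s := by
          rw [hc]
          exact le_trans (Finset.card_filter_le _ _) (le_of_eq hcardIcc)
        have hsplit := Finset.card_filter_add_card_filter_not
          (s := Finset.Icc (1:ℤ) s) (p := fun y => (d:ℤ) ∣ y)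
        have hfneg : ((Finset.Icc (1:ℤ) s).filter (fun y => ¬ (d:ℤ) ∣ y)).card = s - c := by
          omega
        have hHcard : Hfin.card = s * (s - c) := by
          rw [hH, Finset.card_product, hcardIcc, hfneg]
        rw [hHcard]
        have hcR : (c:ℝ) ≤ K := le_trans (by exact_mod_cast hcm) hmK
        have : ((s * (s - c) : ℕ) : ℝ) = (s:ℝ) * ((s:ℝ) - c) := by
          push_cast [Nat.cast_sub hcs]
          ring
        rw [this]
        nlinarith
      · -- components
        intro v
        set q := (v : ℤ × ℤ).2 / (d:ℤ) with hq
        set T : Finset (ℤ × ℤ) :=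
          Finset.Icc (1:ℤ) s ×ˢ Finset.Icc ((d:ℤ)*q+1) ((d:ℤ)*q+d-1) with hT
        have hTcard : T.card = s * (d - 1) := by
          rw [hT, Finset.card_product, Int.card_Icc, Int.card_Icc]
          congr 1 <;> omega
        have hinv : ∀ a b : (↑Hfin : Set (ℤ × ℤ)),
            (SimpleGraph.induce (↑Hfin : Set (ℤ × ℤ)) kingGraph).Adj a b →
            (a : ℤ × ℤ).2 / (d:ℤ) = (b : ℤ × ℤ).2 / (d:ℤ) := by
          intro a b hab
          have hadj : kingGraph.Adj (a : ℤ × ℤ) (b : ℤ × ℤ) := hab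
          have hco := king_adj_coords' hadj
          have haH := (memH _).mp (Finset.mem_coe.mp a.2)
          have hbH := (memH _).mp (Finset.mem_coe.mp b.2)
          exact strip_eq hdZ haH.2.2 hbH.2.2 hco.2.2.1 hco.2.2.2
        have hbound := comp_card_le (G := kingGraph) (↑Hfin : Set (ℤ × ℤ)) T v ?_
        · have hdm : d - 1 = s / (m+1) := by omega
          have hcast : ((s * (d-1) : ℕ) : ℝ) ≤ (s:ℝ) * ((s:ℝ) / ((m:ℝ)+1)) := by
            push_cast
            apply mul_le_mul_of_nonneg_left _ (le_of_lt hsR)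
            rw [hdm]
            calc ((s/(m+1) : ℕ) : ℝ) ≤ (s:ℝ) / ((m+1 : ℕ):ℝ) := Nat.cast_div_le
              _ = (s:ℝ) / ((m:ℝ)+1) := by push_cast; ring
          have haF : aFun K = 1 / ((m:ℝ)+1) := by
            rw [aFun, if_pos hK1, hmcast]
          have hm1R : (0:ℝ) < (m:ℝ) + 1 := by positivity
          calc (Nat.card {w : (↑Hfin : Set (ℤ×ℤ)) //
                (SimpleGraph.induce (↑Hfin : Set (ℤ×ℤ)) kingGraph).Reachable v w} : ℝ)
              ≤ ((T.card : ℕ) : ℝ) := by exact_mod_cast hbound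
            _ = ((s * (d-1) : ℕ) : ℝ) := by rw [hTcard]
            _ ≤ (s:ℝ) * ((s:ℝ) / ((m:ℝ)+1)) := hcast
            _ ≤ (aFun K + ε) * (s:ℝ)^2 := by
                rw [haF]
                rw [div_eq_mul_inv, one_div]
                nlinarith [sq_nonneg (s:ℝ), mul_pos hsR hsR, inv_pos.mpr hm1R]
        · intro w hw
          have hq' : (w : ℤ × ℤ).2 / (d:ℤ) = q := by
            rw [hq]
            exact (reach_inv _ hinv hw).symm
          have hwH := (memH _).mp (Finset.mem_coe.mp w.2)
          rw [hT, Finset.mem_product, Finset.mem_Icc, Finset.mem_Icc]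
          refine ⟨⟨hwH.1.1, hwH.1.2⟩, ?_, ?_⟩
          · have h1 := Int.mul_ediv_add_emod ((w : ℤ × ℤ).2) (d:ℤ)
            have h2 : 0 ≤ (w : ℤ × ℤ).2 % (d:ℤ) := Int.emod_nonneg _ hdZ.ne'
            have h3 : (w : ℤ × ℤ).2 % (d:ℤ) ≠ 0 :=
              fun hh => hwH.2.2 (Int.dvd_of_emod_eq_zero hh)
            rw [← hq']
            omega
          · have h1 := Int.mul_ediv_add_emod ((w : ℤ × ℤ).2) (d:ℤ)
            have h2 : (w : ℤ × ℤ).2 % (d:ℤ) < d := Int.emod_lt_of_pos _ hdZ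
            rw [← hq']
            omega
    · -- K ≤ 1 : corner barrier
      have hK1' : K ≤ 1 := not_lt.mp hK1
      have hs2K : 2 / K ≤ (s:ℝ) := by
        calc 2/K ≤ (⌈2/K⌉₊ : ℝ) := Nat.le_ceil _
          _ ≤ (s:ℝ) := by exact_mod_cast le_trans (by omega) hs
      have hsKe : K / ε ≤ (s:ℝ) := by
        calc K/ε ≤ (⌈K/ε⌉₊ : ℝ) := Nat.le_ceil _
          _ ≤ (s:ℝ) := by exact_mod_cast le_trans (by omega) hs
      have hKs2 : (1:ℝ) ≤ K * s / 2 := by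
        rw [div_le_iff₀ hK] at hs2K
        linarith
      have hKse : K * s ≤ ε * (s:ℝ)^2 := by
        rw [div_le_iff₀ hε] at hsKe
        nlinarith
      set t : ℕ := ⌊K * s / 2⌋₊ with ht
      have htle : (t:ℝ) ≤ K * s / 2 := Nat.floor_le (by positivity)
      have htge : K * s / 2 - 1 ≤ (t:ℝ) := by
        have := Nat.lt_floor_add_one (K * s / 2)
        linarith
      have ht1 : 1 ≤ t := Nat.le_floor (by exact_mod_cast hKs2)
      have hts : t ≤ s := by
        have : (t:ℝ) ≤ (s:ℝ) := by nlinarith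
        exact_mod_cast this
      set L : ℤ × ℤ → Prop :=
        fun p => (p.1 = (t:ℤ) ∧ p.2 ≤ (t:ℤ)) ∨ (p.2 = (t:ℤ) ∧ p.1 ≤ (t:ℤ)) with hL
      set box : Finset (ℤ × ℤ) := Finset.Icc (1:ℤ) s ×ˢ Finset.Icc (1:ℤ) s with hbox
      have hcardIccs : (Finset.Icc (1:ℤ) s).card = s := by rw [Int.card_Icc]; omega
      have hcardIcct : (Finset.Icc (1:ℤ) t).card = t := by rw [Int.card_Icc]; omega
      have hboxcard : box.card = s * s := by
        rw [hbox, Finset.card_product, hcardIccs]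
      set Hfin : Finset (ℤ × ℤ) := box.filter (fun p => ¬ L p) with hH
      have memH : ∀ p : ℤ × ℤ, p ∈ Hfin ↔
          ((1 ≤ p.1 ∧ p.1 ≤ s) ∧ (1 ≤ p.2 ∧ p.2 ≤ s)) ∧ ¬ L p := by
        intro p
        simp [hH, hbox, Finset.mem_filter, Finset.mem_product, Finset.mem_Icc]
      refine ⟨↑Hfin, ?_, ?_, ?_⟩
      · intro p hp
        rw [Finset.mem_coe, memH] at hp
        exact ⟨⟨hp.1.1.1, hp.1.1.2⟩, ⟨hp.1.2.1, hp.1.2.2⟩⟩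
      · -- cardinality
        rw [Set.ncard_coe_finset]
        have hLsub : box.filter (fun p => L p) ⊆
            ({((t:ℤ))} : Finset ℤ) ×ˢ Finset.Icc (1:ℤ) t ∪
              Finset.Icc (1:ℤ) t ×ˢ ({((t:ℤ))} : Finset ℤ) := by
          intro p hp
          simp only [Finset.mem_filter, hbox, Finset.mem_product, Finset.mem_Icc, hL] at hp
          simp only [Finset.mem_union, Finset.mem_product, Finset.mem_singleton, Finset.mem_Icc]
          rcases hp.2 with ⟨h1, h2⟩ | ⟨h1, h2⟩
          · exact Or.inl ⟨h1, hp.1.2.1, h2⟩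
          · exact Or.inr ⟨⟨hp.1.1.1, h2⟩, h1⟩
        have hLcard : (box.filter (fun p => L p)).card ≤ 2 * t := by
          calc (box.filter (fun p => L p)).card
              ≤ (({((t:ℤ))} : Finset ℤ) ×ˢ Finset.Icc (1:ℤ) t ∪
                Finset.Icc (1:ℤ) t ×ˢ ({((t:ℤ))} : Finset ℤ)).card :=
                Finset.card_le_card hLsub
            _ ≤ (({((t:ℤ))} : Finset ℤ) ×ˢ Finset.Icc (1:ℤ) t).card
                + (Finset.Icc (1:ℤ) t ×ˢ ({((t:ℤ))} : Finset ℤ)).card :=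
                Finset.card_union_le _ _
            _ ≤ 2 * t := by
                rw [Finset.card_product, Finset.card_product, hcardIcct,
                  Finset.card_singleton]
                omega
        have hsplit := Finset.card_filter_add_card_filter_not
          (s := box) (p := fun p => L p)
        have hHge : s * s ≤ Hfin.card + 2 * t := by
          rw [hH]
          omega
        have h2t : 2 * (t:ℝ) ≤ K * s := by linarith
        have : ((s*s : ℕ) : ℝ) ≤ (Hfin.card : ℝ) + 2 * (t:ℝ) := by
          exact_mod_cast hHge
        push_cast at this ⊢
        nlinarith
      · -- components
        intro v
        have hstep : ∀ a b : ℤ×ℤ, a ∈ Hfin → b ∈ Hfin → kingGraph.Adj a b →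
            (a.1 < (t:ℤ) ∧ a.2 < (t:ℤ)) → (b.1 < (t:ℤ) ∧ b.2 < (t:ℤ)) := by
          intro a b ha hb hadj hA
          obtain ⟨hc1, hc2, hc3, hc4⟩ := king_adj_coords' hadj
          have hbH := (memH _).mp hb
          by_contra hB
          apply hbH.2
          rw [hL]
          rcases not_and_or.mp hB with h | h
          · push_neg at h
            exact Or.inl ⟨by omega, by omega⟩
          · push_neg at h
            exact Or.inr ⟨by omega, by omega⟩
        have hinv : ∀ a b : (↑Hfin : Set (ℤ × ℤ)),
            (SimpleGraph.induce (↑Hfin : Set (ℤ × ℤ)) kingGraph).Adj a b →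
            ((a : ℤ×ℤ).1 < (t:ℤ) ∧ (a : ℤ×ℤ).2 < (t:ℤ))
              = ((b : ℤ×ℤ).1 < (t:ℤ) ∧ (b : ℤ×ℤ).2 < (t:ℤ)) := by
          intro a b hab
          have hadj : kingGraph.Adj (a : ℤ × ℤ) (b : ℤ × ℤ) := hab
          have haM := Finset.mem_coe.mp a.2
          have hbM := Finset.mem_coe.mp b.2
          exact propext ⟨hstep _ _ haM hbM hadj, hstep _ _ hbM haM hadj.symm⟩
        have haF : aFun K = 1 - (K/2)^2 := by rw [aFun, if_neg hK1]
        by_cases hv : (v : ℤ×ℤ).1 < (t:ℤ) ∧ (v : ℤ×ℤ).2 < (t:ℤ)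
        · -- corner component
          set T : Finset (ℤ × ℤ) :=
            Finset.Icc (1:ℤ) ((t:ℤ)-1) ×ˢ Finset.Icc (1:ℤ) ((t:ℤ)-1) with hT
          have hTcard : T.card = (t-1) * (t-1) := by
            rw [hT, Finset.card_product, Int.card_Icc]
            congr 1 <;> omega
          have hbound := comp_card_le (G := kingGraph) (↑Hfin : Set (ℤ × ℤ)) T v ?_
          · have hc1 : ((t - 1 : ℕ) : ℝ) ≤ K * s / 2 := by
              have : ((t - 1 : ℕ) : ℝ) ≤ (t:ℝ) := by
                exact_mod_cast Nat.cast_le.mpr (Nat.sub_le t 1)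
              linarith
            have hc0 : (0:ℝ) ≤ ((t - 1 : ℕ) : ℝ) := Nat.cast_nonneg _
            calc (Nat.card {w : (↑Hfin : Set (ℤ×ℤ)) //
                  (SimpleGraph.induce (↑Hfin : Set (ℤ×ℤ)) kingGraph).Reachable v w} : ℝ)
                ≤ ((T.card : ℕ) : ℝ) := by exact_mod_cast hbound
              _ = ((t-1 : ℕ) : ℝ) * ((t-1 : ℕ) : ℝ) := by rw [hTcard]; push_cast; ring
              _ ≤ (aFun K + ε) * (s:ℝ)^2 := by
                  rw [haF]
                  nlinarith [mul_le_mul hc1 hc1 hc0 (by positivity : (0:ℝ) ≤ K*(s:ℝ)/2),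
                    mul_le_mul hK1' hK1' hK.le zero_le_one,
                    mul_nonneg hε.le (sq_nonneg (s:ℝ)), mul_pos hsR hsR]
          · intro w hw
            have hw' := reach_inv (fun w : (↑Hfin : Set (ℤ×ℤ)) =>
              ((w : ℤ×ℤ).1 < (t:ℤ) ∧ (w : ℤ×ℤ).2 < (t:ℤ))) hinv hw
            have hwP : (w : ℤ×ℤ).1 < (t:ℤ) ∧ (w : ℤ×ℤ).2 < (t:ℤ) := hw' ▸ hv
            have hwH := (memH _).mp (Finset.mem_coe.mp w.2)
            rw [hT, Finset.mem_product, Finset.mem_Icc, Finset.mem_Icc]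
            exact ⟨⟨hwH.1.1.1, by omega⟩, ⟨hwH.1.2.1, by omega⟩⟩
        · -- big component
          set T : Finset (ℤ × ℤ) :=
            box \ (Finset.Icc (1:ℤ) t ×ˢ Finset.Icc (1:ℤ) t) with hT
          have hsub : Finset.Icc (1:ℤ) t ×ˢ Finset.Icc (1:ℤ) t ⊆ box := by
            rw [hbox]
            exact Finset.product_subset_product
              (Finset.Icc_subset_Icc_right (by exact_mod_cast hts))
              (Finset.Icc_subset_Icc_right (by exact_mod_cast hts))
          have hTcard : T.card = s * s - t * t := by
            rw [hT, Finset.card_sdiff_of_subset hsub, hboxcard, Finset.card_product, hcardIcct]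
          have hbound := comp_card_le (G := kingGraph) (↑Hfin : Set (ℤ × ℤ)) T v ?_
          · have htts : t * t ≤ s * s := Nat.mul_le_mul hts hts
            have hcast : ((s*s - t*t : ℕ) : ℝ) = (s:ℝ)^2 - (t:ℝ)^2 := by
              push_cast [Nat.cast_sub htts]
              ring
            have hsq : (K*(s:ℝ)/2 - 1)^2 ≤ (t:ℝ)^2 := by
              nlinarith [mul_le_mul htge htge (by linarith : (0:ℝ) ≤ K*(s:ℝ)/2-1) (Nat.cast_nonneg t)]
            calc (Nat.card {w : (↑Hfin : Set (ℤ×ℤ)) //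
                  (SimpleGraph.induce (↑Hfin : Set (ℤ×ℤ)) kingGraph).Reachable v w} : ℝ)
                ≤ ((T.card : ℕ) : ℝ) := by exact_mod_cast hbound
              _ = (s:ℝ)^2 - (t:ℝ)^2 := by rw [hTcard, hcast]
              _ ≤ (aFun K + ε) * (s:ℝ)^2 := by
                  rw [haF]
                  nlinarith [hsq, hKse]
          · intro w hw
            have hw' := reach_inv (fun w : (↑Hfin : Set (ℤ×ℤ)) =>
              ((w : ℤ×ℤ).1 < (t:ℤ) ∧ (w : ℤ×ℤ).2 < (t:ℤ))) hinv hw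
            have hwP : ¬ ((w : ℤ×ℤ).1 < (t:ℤ) ∧ (w : ℤ×ℤ).2 < (t:ℤ)) := by
              rw [hw'] at hv
              exact hv
            have hwH := (memH _).mp (Finset.mem_coe.mp w.2)
            rw [hT, Finset.mem_sdiff]
            constructor
            · rw [hbox, Finset.mem_product, Finset.mem_Icc, Finset.mem_Icc]
              exact ⟨⟨hwH.1.1.1, hwH.1.1.2⟩, ⟨hwH.1.2.1, hwH.1.2.2⟩⟩
            · intro hmem
              rw [Finset.mem_product, Finset.mem_Icc, Finset.mem_Icc] at hmem
              apply hwH.2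
              rw [hL]
              rcases not_and_or.mp hwP with h | h
              · push_neg at h
                exact Or.inl ⟨by omega, by omega⟩
              · push_neg at h
                exact Or.inr ⟨by omega, by omega⟩
  · -- 0 < aFun K < 1
    intro K hK
    rw [aFun]
    split_ifs with h
    · have h1 : (1:ℤ) ≤ ⌊K⌋ := Int.le_floor.mpr (by exact_mod_cast h.le)
      have h1R : (1:ℝ) ≤ (⌊K⌋:ℝ) := by exact_mod_cast h1
      constructor
      · positivity
      · rw [div_lt_one (by linarith)]
        linarith
    · have hK1 : K ≤ 1 := not_lt.mp h
      constructor <;> nlinarith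
  · -- tendsto
    apply tendsto_of_tendsto_of_tendsto_of_le_of_le' tendsto_const_nhds
      tendsto_inv_atTop_zero (g := fun _ => (0:ℝ))
    · filter_upwards [eventually_gt_atTop (1:ℝ)] with K hK
      rw [aFun, if_pos hK]
      have h1 : (1:ℤ) ≤ ⌊K⌋ := Int.le_floor.mpr (by exact_mod_cast hK.le)
      have h1R : (1:ℝ) ≤ (⌊K⌋:ℝ) := by exact_mod_cast h1
      positivity
    · filter_upwards [eventually_gt_atTop (1:ℝ)] with K hK
      rw [aFun, if_pos hK]
      have hfl : K ≤ (⌊K⌋:ℝ) + 1 := le_of_lt (Int.lt_floor_add_one K)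
      rw [one_div]
      exact inv_anti₀ (by linarith) hfl

end
end

section
/- For every finite set A ⊆ ℤ², the number of edges of the integer lattice graph with one endpoint in A and the other endpoint in ℤ²∖A is at least 4·√|A|. -/
open Filter Topology

noncomputable section

/-- Adjacency in the integer lattice graph: Euclidean distance exactly `1`. -/
def latticeAdj (p q : ℤ × ℤ) : Prop :=
  Real.sqrt (((p.1 - q.1 : ℤ) : ℝ)^2 + ((p.2 - q.2 : ℤ) : ℝ)^2) = 1

lemma latticeAdj_symm {p q : ℤ × ℤ} (h : latticeAdj p q) : latticeAdj q p := by
  unfold latticeAdj at h ⊢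
  have : (((q.1 - p.1 : ℤ) : ℝ)^2 + ((q.2 - p.2 : ℤ) : ℝ)^2)
      = (((p.1 - q.1 : ℤ) : ℝ)^2 + ((p.2 - q.2 : ℤ) : ℝ)^2) := by push_cast; ring
  rw [this]; exact h

lemma latticeAdj_irrefl (p : ℤ × ℤ) : ¬ latticeAdj p p := by
  unfold latticeAdj
  simp

/-- The integer lattice graph `ℤ²`. -/
def latticeGraph : SimpleGraph (ℤ × ℤ) where
  Adj p q := latticeAdj p q
  symm := ⟨fun _ _ h => latticeAdj_symm h⟩
  loopless := ⟨latticeAdj_irrefl⟩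

/-- `e(A, Aᶜ)`: the number of lattice edges with one endpoint in `A` and the other
outside `A` (counted as ordered pairs whose first coordinate lies in `A`, which counts
each such edge exactly once). -/
def eBnd (A : Set (ℤ × ℤ)) : ℕ :=
  Set.ncard {e : (ℤ × ℤ) × (ℤ × ℤ) | e.1 ∈ A ∧ e.2 ∉ A ∧ latticeAdj e.1 e.2}

lemma latticeAdj_iff (p q : ℤ × ℤ) :
    latticeAdj p q ↔ (p.1 - q.1)^2 + (p.2 - q.2)^2 = 1 := by
  unfold latticeAdj
  rw [show (1:ℝ) = Real.sqrt 1 by simp,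
    Real.sqrt_inj (by positivity) (by norm_num)]
  constructor <;> intro h <;> exact_mod_cast h

lemma int_sq_one {a b : ℤ} (h : a^2 + b^2 = 1) :
    (a = 0 ∧ (b = 1 ∨ b = -1)) ∨ (b = 0 ∧ (a = 1 ∨ a = -1)) := by
  have ha1 : a ≤ 1 := by nlinarith [sq_nonneg b]
  have ha2 : -1 ≤ a := by nlinarith [sq_nonneg b]
  have hb1 : b ≤ 1 := by nlinarith [sq_nonneg a]
  have hb2 : -1 ≤ b := by nlinarith [sq_nonneg a]
  interval_cases a <;> interval_cases b <;> simp_all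

lemma exists_succ_not_mem {S : Set ℤ} (h : S.Finite) (hne : S.Nonempty) :
    ∃ y ∈ S, y + 1 ∉ S := by
  classical
  have ht : h.toFinset.Nonempty := by simpa using hne
  refine ⟨h.toFinset.max' ht, by simpa using h.toFinset.max'_mem ht, fun hmem => ?_⟩
  have := h.toFinset.le_max' _ (by simpa using hmem)
  omega

lemma exists_pred_not_mem {S : Set ℤ} (h : S.Finite) (hne : S.Nonempty) :
    ∃ y ∈ S, y - 1 ∉ S := by
  classical
  have ht : h.toFinset.Nonempty := by simpa using hne
  refine ⟨h.toFinset.min' ht, by simpa using h.toFinset.min'_mem ht, fun hmem => ?_⟩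
  have := h.toFinset.min'_le _ (by simpa using hmem)
  omega

/-- isoperimetric inequality. For every finite `A ⊆ ℤ²`,
`e(A, Aᶜ) ≥ 4·√|A|`. -/
theorem lattice_isoperimetric (A : Set (ℤ × ℤ)) (hA : A.Finite) :
    4 * Real.sqrt (A.ncard : ℝ) ≤ (eBnd A : ℝ) := by
  classical
  rcases A.eq_empty_or_nonempty with rfl | hne
  · simp [eBnd]
  set C : Set ℤ := Prod.fst '' A with hCdef
  set R : Set ℤ := Prod.snd '' A with hRdef
  have hCfin : C.Finite := hA.image _
  have hRfin : R.Finite := hA.image _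
  -- column sections are finite and nonempty
  have hcolfin : ∀ x : ℤ, {y : ℤ | (x, y) ∈ A}.Finite := by
    intro x
    have : {y : ℤ | (x, y) ∈ A} = (fun y => ((x, y) : ℤ × ℤ)) ⁻¹' A := rfl
    rw [this]
    exact hA.preimage (fun a _ b _ h => by simpa using h)
  have hrowfin : ∀ y : ℤ, {x : ℤ | (x, y) ∈ A}.Finite := by
    intro y
    have : {x : ℤ | (x, y) ∈ A} = (fun x => ((x, y) : ℤ × ℤ)) ⁻¹' A := rfl
    rw [this]
    exact hA.preimage (fun a _ b _ h => by simpa using h)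
  have hcolne : ∀ x ∈ C, {y : ℤ | (x, y) ∈ A}.Nonempty := by
    rintro x ⟨p, hp, rfl⟩; exact ⟨p.2, by simpa using hp⟩
  have hrowne : ∀ y ∈ R, {x : ℤ | (x, y) ∈ A}.Nonempty := by
    rintro y ⟨p, hp, rfl⟩; exact ⟨p.1, by simpa using hp⟩
  -- choose extremal points
  have hU : ∀ x ∈ C, ∃ y, (x, y) ∈ A ∧ (x, y + 1) ∉ A := fun x hx =>
    exists_succ_not_mem (hcolfin x) (hcolne x hx)
  have hD : ∀ x ∈ C, ∃ y, (x, y) ∈ A ∧ (x, y - 1) ∉ A := fun x hx =>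
    exists_pred_not_mem (hcolfin x) (hcolne x hx)
  have hRt : ∀ y ∈ R, ∃ x, (x, y) ∈ A ∧ (x + 1, y) ∉ A := fun y hy =>
    exists_succ_not_mem (hrowfin y) (hrowne y hy)
  have hLt : ∀ y ∈ R, ∃ x, (x, y) ∈ A ∧ (x - 1, y) ∉ A := fun y hy =>
    exists_pred_not_mem (hrowfin y) (hrowne y hy)
  choose! fU hU1 hU2 using hU
  choose! fD hD1 hD2 using hD
  choose! fR hR1 hR2 using hRt
  choose! fL hL1 hL2 using hLt
  set Eset : Set ((ℤ × ℤ) × (ℤ × ℤ)) :=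
    {e | e.1 ∈ A ∧ e.2 ∉ A ∧ latticeAdj e.1 e.2} with hEdef
  -- Eset is finite
  have hEfin : Eset.Finite := by
    have hoff : ({((0:ℤ),(1:ℤ)), (0,-1), (1,0), (-1,0)} : Set (ℤ × ℤ)).Finite := by
      apply Set.toFinite
    apply Set.Finite.subset ((hA.prod hoff).image (fun pd => (pd.1, pd.1 + pd.2)))
    rintro ⟨p, q⟩ ⟨hp, hq, hadj⟩
    refine ⟨(p, q - p), ⟨hp, ?_⟩, by simp⟩
    rw [latticeAdj_iff] at hadj
    have h2 := int_sq_one hadj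
    simp only [Set.mem_insert_iff, Set.mem_singleton_iff, Prod.ext_iff, Prod.fst_sub,
      Prod.snd_sub] at h2 ⊢
    omega
  -- the four families of boundary edges
  set EU : Set ((ℤ × ℤ) × (ℤ × ℤ)) := (fun x => ((x, fU x), (x, fU x + 1))) '' C with hEU
  set ED : Set ((ℤ × ℤ) × (ℤ × ℤ)) := (fun x => ((x, fD x), (x, fD x - 1))) '' C with hED
  set ER : Set ((ℤ × ℤ) × (ℤ × ℤ)) := (fun y => ((fR y, y), (fR y + 1, y))) '' R with hER
  set EL : Set ((ℤ × ℤ) × (ℤ × ℤ)) := (fun y => ((fL y, y), (fL y - 1, y))) '' R with hEL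
  have hsub : EU ∪ ED ∪ ER ∪ EL ⊆ Eset := by
    rintro e (((⟨x, hx, rfl⟩ | ⟨x, hx, rfl⟩) | ⟨y, hy, rfl⟩) | ⟨y, hy, rfl⟩)
    · exact ⟨hU1 x hx, hU2 x hx, by rw [latticeAdj_iff]; ring⟩
    · exact ⟨hD1 x hx, hD2 x hx, by rw [latticeAdj_iff]; ring⟩
    · exact ⟨hR1 y hy, hR2 y hy, by rw [latticeAdj_iff]; ring⟩
    · exact ⟨hL1 y hy, hL2 y hy, by rw [latticeAdj_iff]; ring⟩
  have hEUfin : EU.Finite := hCfin.image _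
  have hEDfin : ED.Finite := hCfin.image _
  have hERfin : ER.Finite := hRfin.image _
  have hELfin : EL.Finite := hRfin.image _
  have hcardEU : EU.ncard = C.ncard :=
    Set.ncard_image_of_injOn (fun a _ b _ h => congrArg (fun e => e.1.1) h)
  have hcardED : ED.ncard = C.ncard :=
    Set.ncard_image_of_injOn (fun a _ b _ h => congrArg (fun e => e.1.1) h)
  have hcardER : ER.ncard = R.ncard :=
    Set.ncard_image_of_injOn (fun a _ b _ h => congrArg (fun e => e.1.2) h)
  have hcardEL : EL.ncard = R.ncard :=
    Set.ncard_image_of_injOn (fun a _ b _ h => congrArg (fun e => e.1.2) h)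
  -- pairwise disjointness
  have dUD : Disjoint EU ED := by
    rw [Set.disjoint_left]
    rintro e ⟨x, hx, rfl⟩ ⟨x', hx', h⟩
    simp only [Prod.ext_iff] at h; omega
  have dUR : Disjoint EU ER := by
    rw [Set.disjoint_left]
    rintro e ⟨x, hx, rfl⟩ ⟨y, hy, h⟩
    simp only [Prod.ext_iff] at h; omega
  have dUL : Disjoint EU EL := by
    rw [Set.disjoint_left]
    rintro e ⟨x, hx, rfl⟩ ⟨y, hy, h⟩
    simp only [Prod.ext_iff] at h; omega
  have dDR : Disjoint ED ER := by
    rw [Set.disjoint_left]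
    rintro e ⟨x, hx, rfl⟩ ⟨y, hy, h⟩
    simp only [Prod.ext_iff] at h; omega
  have dDL : Disjoint ED EL := by
    rw [Set.disjoint_left]
    rintro e ⟨x, hx, rfl⟩ ⟨y, hy, h⟩
    simp only [Prod.ext_iff] at h; omega
  have dRL : Disjoint ER EL := by
    rw [Set.disjoint_left]
    rintro e ⟨y, hy, rfl⟩ ⟨y', hy', h⟩
    simp only [Prod.ext_iff] at h; omega
  have hunion : (EU ∪ ED ∪ ER ∪ EL).ncard
      = C.ncard + C.ncard + R.ncard + R.ncard := by
    rw [Set.ncard_union_eq (by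
        exact Set.disjoint_union_left.mpr ⟨Set.disjoint_union_left.mpr ⟨dUL, dDL⟩, dRL⟩)
      ((hEUfin.union hEDfin).union hERfin) hELfin,
      Set.ncard_union_eq (Set.disjoint_union_left.mpr ⟨dUR, dDR⟩)
      (hEUfin.union hEDfin) hERfin,
      Set.ncard_union_eq dUD hEUfin hEDfin,
      hcardEU, hcardED, hcardER, hcardEL]
  have hkey : 2 * (C.ncard + R.ncard) ≤ eBnd A := by
    have h3 := Set.ncard_le_ncard hsub hEfin
    rw [hunion] at h3
    have h4 : eBnd A = Eset.ncard := rfl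
    omega
  -- |A| ≤ |C| * |R|
  have hAsub : A ⊆ C ×ˢ R := fun p hp => ⟨⟨p, hp, rfl⟩, ⟨p, hp, rfl⟩⟩
  have hprodcard : (C ×ˢ R).ncard = C.ncard * R.ncard := by
    rw [← Nat.card_coe_set_eq, ← Nat.card_coe_set_eq, ← Nat.card_coe_set_eq,
      Nat.card_congr (Equiv.Set.prod C R), Nat.card_prod]
  have hAcard : A.ncard ≤ C.ncard * R.ncard := by
    rw [← hprodcard]
    exact Set.ncard_le_ncard hAsub (hCfin.prod hRfin)
  -- finish with real arithmetic
  set c : ℝ := (C.ncard : ℝ) with hc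
  set r : ℝ := (R.ncard : ℝ) with hr
  have hc0 : 0 ≤ c := by positivity
  have hr0 : 0 ≤ r := by positivity
  have hn : (A.ncard : ℝ) ≤ c * r := by rw [hc, hr]; exact_mod_cast hAcard
  have hsqrt : Real.sqrt (A.ncard : ℝ) ≤ (c + r) / 2 := by
    rw [show (c + r) / 2 = Real.sqrt (((c + r) / 2) ^ 2) from
      (Real.sqrt_sq (by positivity)).symm]
    apply Real.sqrt_le_sqrt
    nlinarith [sq_nonneg (c - r), hn, hc0, hr0]
  have hkey' : 2 * (c + r) ≤ (eBnd A : ℝ) := by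
    have : ((2 * (C.ncard + R.ncard) : ℕ) : ℝ) ≤ ((eBnd A : ℕ) : ℝ) := by
      exact_mod_cast hkey
    push_cast at this
    linarith
  linarith

end
end

section
/- Let α, β > 0 be real numbers and s ∈ ℕ. Let H ⊆ {1,…,s}² with |H| ≥ s² − α·s, and let H_β be the union of all connected components of the subgraph of the grid graph induced by H that have at most β·s² vertices. Then |H_β| ≤ √β·(1+α)·s². -/
open Filter Topology

noncomputable section

-- up and right adjacency
lemma latticeAdj_up (x y : ℤ) : latticeAdj (x, y) (x, y + 1) := by
  unfold latticeAdj
  push_cast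
  norm_num

lemma latticeAdj_right (x y : ℤ) : latticeAdj (x, y) (x + 1, y) := by
  unfold latticeAdj
  push_cast
  norm_num

/-- Reachability within the induced subgraph, as a relation on `ℤ × ℤ`. -/
def Reach (H : Set (ℤ × ℤ)) (p q : ℤ × ℤ) : Prop :=
  ∃ (hp : p ∈ H) (hq : q ∈ H),
    (SimpleGraph.induce H latticeGraph).Reachable ⟨p, hp⟩ ⟨q, hq⟩

def comp (H : Set (ℤ × ℤ)) (p : ℤ × ℤ) : Set (ℤ × ℤ) := {q | Reach H p q}

lemma reach_refl {H : Set (ℤ × ℤ)} {p : ℤ × ℤ} (hp : p ∈ H) : Reach H p p :=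
  ⟨hp, hp, SimpleGraph.Reachable.refl _⟩

lemma reach_symm {H : Set (ℤ × ℤ)} {p q : ℤ × ℤ} (h : Reach H p q) : Reach H q p := by
  obtain ⟨hp, hq, hr⟩ := h; exact ⟨hq, hp, hr.symm⟩

lemma reach_trans {H : Set (ℤ × ℤ)} {p q r : ℤ × ℤ} (h1 : Reach H p q) (h2 : Reach H q r) :
    Reach H p r := by
  obtain ⟨hp, hq, hr1⟩ := h1; obtain ⟨hq', hr, hr2⟩ := h2
  exact ⟨hp, hr, hr1.trans hr2⟩

lemma reach_of_adj {H : Set (ℤ × ℤ)} {p q : ℤ × ℤ} (hp : p ∈ H) (hq : q ∈ H)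
    (h : latticeAdj p q) : Reach H p q := by
  refine ⟨hp, hq, SimpleGraph.Adj.reachable ?_⟩
  simp only [SimpleGraph.comap_adj, Function.Embedding.coe_subtype]
  exact h

lemma comp_subset {H : Set (ℤ × ℤ)} (p : ℤ × ℤ) : comp H p ⊆ H := by
  intro q hq; exact hq.2.1

lemma mem_comp_self {H : Set (ℤ × ℤ)} {p : ℤ × ℤ} (hp : p ∈ H) : p ∈ comp H p := reach_refl hp

lemma comp_eq_of_reach {H : Set (ℤ × ℤ)} {p q : ℤ × ℤ} (h : Reach H p q) :
    comp H p = comp H q := by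
  ext r
  exact ⟨fun hr => reach_trans (reach_symm h) hr, fun hr => reach_trans h hr⟩

/-- `Nat.card` of the reachable-subtype equals the `ncard` of `comp`. -/
lemma card_reach_eq (H : Set (ℤ × ℤ)) (p : ℤ × ℤ) (hp : p ∈ H) :
    Nat.card {q : H // (SimpleGraph.induce H latticeGraph).Reachable ⟨p, hp⟩ q}
      = (comp H p).ncard := by
  have h1 : comp H p
      = Subtype.val '' {q : ↥H | (SimpleGraph.induce H latticeGraph).Reachable ⟨p, hp⟩ q} := by
    ext q
    constructor
    · rintro ⟨hp', hq, hr⟩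
      exact ⟨⟨q, hq⟩, hr, rfl⟩
    · rintro ⟨⟨q', hq'⟩, hr, rfl⟩
      exact ⟨hp, hq', hr⟩
  rw [h1, Set.ncard_image_of_injective _ Subtype.val_injective, ← Nat.card_coe_set_eq]
  rfl

/-- The set of vertices that are topmost in their column within their component. -/
def TopSet (H : Set (ℤ × ℤ)) : Set (ℤ × ℤ) :=
  {p | ∃ _ : p ∈ H, ∀ q ∈ comp H p, q.1 = p.1 → q.2 ≤ p.2}

/-- The set of vertices that are rightmost in their row within their component. -/
def RightSet (H : Set (ℤ × ℤ)) : Set (ℤ × ℤ) :=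
  {p | ∃ _ : p ∈ H, ∀ q ∈ comp H p, q.2 = p.2 → q.1 ≤ p.1}

lemma topSet_subset (H : Set (ℤ × ℤ)) : TopSet H ⊆ H := fun _ hp => hp.1
lemma rightSet_subset (H : Set (ℤ × ℤ)) : RightSet H ⊆ H := fun _ hp => hp.1

lemma ncard_Icc_int (s : ℕ) : (Set.Icc (1 : ℤ) s).ncard = s := by
  rw [← Finset.coe_Icc, Set.ncard_coe_finset, Int.card_Icc]
  omega

lemma gridBox_finite (s : ℕ) : (gridBox s).Finite :=
  (Set.finite_Icc _ _).prod (Set.finite_Icc _ _)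

lemma gridBox_ncard (s : ℕ) : (gridBox s).ncard = s ^ 2 := by
  have h : gridBox s = ↑(Finset.Icc (1 : ℤ) s ×ˢ Finset.Icc (1 : ℤ) s) := by
    simp [gridBox, Finset.coe_product]
  rw [h, Set.ncard_coe_finset, Finset.card_product, Int.card_Icc]
  have : ((s : ℤ) + 1 - 1).toNat = s := by omega
  rw [this]; ring

/-- The "move up" injection bounds the number of top vertices. -/
lemma topSet_ncard_le (s : ℕ) (H : Set (ℤ × ℤ)) (hsub : H ⊆ gridBox s) :
    (TopSet H).ncard ≤ (gridBox s \ H).ncard + s := by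
  have hfin : H.Finite := (gridBox_finite s).subset hsub
  have hinj : Function.Injective (fun p : ℤ × ℤ => (p.1, p.2 + 1)) := by
    intro a b h
    simp only [Prod.mk.injEq] at h
    exact Prod.ext h.1 (by omega)
  have himg : (fun p : ℤ × ℤ => (p.1, p.2 + 1)) '' TopSet H
      ⊆ (gridBox s \ H) ∪ (Set.Icc (1 : ℤ) s ×ˢ {(s : ℤ) + 1}) := by
    rintro _ ⟨p, hp, rfl⟩
    dsimp only
    obtain ⟨hpH, htop⟩ := hp
    have hnH : (p.1, p.2 + 1) ∉ H := by
      intro hmem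
      have hr : (p.1, p.2 + 1) ∈ comp H p :=
        reach_of_adj hpH hmem (latticeAdj_up p.1 p.2)
      have := htop _ hr rfl
      omega
    have hbox := hsub hpH
    obtain ⟨⟨h1, h2⟩, h3, h4⟩ := hbox
    by_cases hcase : p.2 + 1 ≤ (s : ℤ)
    · exact Or.inl ⟨⟨⟨by omega, by omega⟩, ⟨by omega, hcase⟩⟩, hnH⟩
    · right
      refine ⟨⟨by omega, by omega⟩, ?_⟩
      simp only [Set.mem_singleton_iff]
      omega
  calc (TopSet H).ncard
      = ((fun p : ℤ × ℤ => (p.1, p.2 + 1)) '' TopSet H).ncard :=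
        (Set.ncard_image_of_injective _ hinj).symm
    _ ≤ ((gridBox s \ H) ∪ (Set.Icc (1 : ℤ) s ×ˢ {(s : ℤ) + 1})).ncard :=
        Set.ncard_le_ncard himg (((gridBox_finite s).diff).union
          (((Set.finite_Icc _ _).prod (Set.finite_singleton _))))
    _ ≤ (gridBox s \ H).ncard + (Set.Icc (1 : ℤ) s ×ˢ {(s : ℤ) + 1}).ncard :=
        Set.ncard_union_le _ _
    _ ≤ (gridBox s \ H).ncard + s := by
        have h1 : Set.Icc (1 : ℤ) (s : ℤ) ×ˢ ({(s : ℤ) + 1} : Set ℤ)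
            = (fun x : ℤ => (x, (s : ℤ) + 1)) '' Set.Icc 1 s := by
          ext q
          constructor
          · rintro ⟨hq1, hq2⟩
            simp only [Set.mem_singleton_iff] at hq2
            exact ⟨q.1, hq1, by rw [← hq2]⟩
          · rintro ⟨x, hx, rfl⟩
            exact ⟨hx, rfl⟩
        have h2 : Function.Injective (fun x : ℤ => (x, (s : ℤ) + 1)) := by
          intro a b h; simpa using h
        rw [h1, Set.ncard_image_of_injective _ h2, ncard_Icc_int]

/-- The "move right" injection bounds the number of right vertices. -/
lemma rightSet_ncard_le (s : ℕ) (H : Set (ℤ × ℤ)) (hsub : H ⊆ gridBox s) :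
    (RightSet H).ncard ≤ (gridBox s \ H).ncard + s := by
  have hfin : H.Finite := (gridBox_finite s).subset hsub
  have hinj : Function.Injective (fun p : ℤ × ℤ => (p.1 + 1, p.2)) := by
    intro a b h
    simp only [Prod.mk.injEq] at h
    exact Prod.ext (by omega) h.2
  have himg : (fun p : ℤ × ℤ => (p.1 + 1, p.2)) '' RightSet H
      ⊆ (gridBox s \ H) ∪ ({(s : ℤ) + 1} ×ˢ Set.Icc (1 : ℤ) s) := by
    rintro _ ⟨p, hp, rfl⟩
    dsimp only
    obtain ⟨hpH, htop⟩ := hp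
    have hnH : (p.1 + 1, p.2) ∉ H := by
      intro hmem
      have hr : (p.1 + 1, p.2) ∈ comp H p :=
        reach_of_adj hpH hmem (latticeAdj_right p.1 p.2)
      have := htop _ hr rfl
      omega
    have hbox := hsub hpH
    obtain ⟨⟨h1, h2⟩, h3, h4⟩ := hbox
    by_cases hcase : p.1 + 1 ≤ (s : ℤ)
    · exact Or.inl ⟨⟨⟨by omega, hcase⟩, ⟨by omega, by omega⟩⟩, hnH⟩
    · right
      refine ⟨?_, ⟨by omega, by omega⟩⟩
      simp only [Set.mem_singleton_iff]
      omega
  calc (RightSet H).ncard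
      = ((fun p : ℤ × ℤ => (p.1 + 1, p.2)) '' RightSet H).ncard :=
        (Set.ncard_image_of_injective _ hinj).symm
    _ ≤ ((gridBox s \ H) ∪ ({(s : ℤ) + 1} ×ˢ Set.Icc (1 : ℤ) s)).ncard :=
        Set.ncard_le_ncard himg (((gridBox_finite s).diff).union
          (((Set.finite_singleton _).prod (Set.finite_Icc _ _))))
    _ ≤ (gridBox s \ H).ncard + ({(s : ℤ) + 1} ×ˢ Set.Icc (1 : ℤ) s).ncard :=
        Set.ncard_union_le _ _
    _ ≤ (gridBox s \ H).ncard + s := by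
        have h1 : ({(s : ℤ) + 1} : Set ℤ) ×ˢ Set.Icc (1 : ℤ) (s : ℤ)
            = (fun x : ℤ => ((s : ℤ) + 1, x)) '' Set.Icc 1 s := by
          ext q
          constructor
          · rintro ⟨hq1, hq2⟩
            simp only [Set.mem_singleton_iff] at hq1
            exact ⟨q.2, hq2, by rw [← hq1]⟩
          · rintro ⟨x, hx, rfl⟩
            exact ⟨rfl, hx⟩
        have h2 : Function.Injective (fun x : ℤ => ((s : ℤ) + 1, x)) := by
          intro a b h; simpa using h
        rw [h1, Set.ncard_image_of_injective _ h2, ncard_Icc_int]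

lemma ncard_prod_set {α β : Type*} (A : Set α) (B : Set β) :
    (A ×ˢ B).ncard = A.ncard * B.ncard := by
  rw [← Nat.card_coe_set_eq, ← Nat.card_coe_set_eq, ← Nat.card_coe_set_eq,
    Nat.card_congr (Equiv.Set.prod A B), Nat.card_prod]

/-- Each column of a component contains exactly one top vertex. -/
lemma cols_eq_top (H : Set (ℤ × ℤ)) (hfin : H.Finite) {p : ℤ × ℤ} (hp : p ∈ H) :
    (Prod.fst '' comp H p).ncard = (TopSet H ∩ comp H p).ncard := by
  have hcompfin : (comp H p).Finite := hfin.subset (comp_subset p)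
  have hinj : Set.InjOn Prod.fst (TopSet H ∩ comp H p) := by
    rintro a ⟨⟨haH, hatop⟩, hac⟩ b ⟨⟨hbH, hbtop⟩, hbc⟩ hab
    have hca : comp H a = comp H p := (comp_eq_of_reach hac).symm
    have hcb : comp H b = comp H p := (comp_eq_of_reach hbc).symm
    have h1 : b.2 ≤ a.2 := hatop b (by rw [hca]; exact hbc) hab.symm
    have h2 : a.2 ≤ b.2 := hbtop a (by rw [hcb]; exact hac) hab
    exact Prod.ext hab (le_antisymm h2 h1)
  have himg : Prod.fst '' (TopSet H ∩ comp H p) = Prod.fst '' comp H p := by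
    apply Set.Subset.antisymm
    · exact Set.image_mono Set.inter_subset_right
    · rintro x ⟨q, hq, rfl⟩
      set S : Set ℤ := {y : ℤ | (q.1, y) ∈ comp H p} with hS
      have hSfin : S.Finite := by
        have : S ⊆ Prod.snd '' comp H p := by
          rintro y hy; exact ⟨(q.1, y), hy, rfl⟩
        exact (hcompfin.image _).subset this
      have hSne : S.Nonempty := ⟨q.2, by simpa [hS] using hq⟩
      obtain ⟨ym, hym, hmax⟩ := Set.Finite.exists_maximalFor id S hSfin hSne
      have hmemc : (q.1, ym) ∈ comp H p := hym
      have hmemH : (q.1, ym) ∈ H := comp_subset p hmemc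
      have htop : (q.1, ym) ∈ TopSet H := by
        refine ⟨hmemH, ?_⟩
        intro r hr hr1
        have hcc : comp H (q.1, ym) = comp H p := (comp_eq_of_reach hmemc).symm
        rw [hcc] at hr
        have hrS : r.2 ∈ S := by
          have : (q.1, r.2) ∈ comp H p := by
            have : r = (q.1, r.2) := Prod.ext hr1 rfl
            rwa [← this]
          exact this
        by_contra hlt
        push_neg at hlt
        exact absurd (hmax hrS (le_of_lt hlt)) (by simp; omega)
      exact ⟨(q.1, ym), ⟨htop, hmemc⟩, rfl⟩
  rw [← himg, Set.ncard_image_of_injOn hinj]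

/-- Each row of a component contains exactly one rightmost vertex. -/
lemma rows_eq_right (H : Set (ℤ × ℤ)) (hfin : H.Finite) {p : ℤ × ℤ} (hp : p ∈ H) :
    (Prod.snd '' comp H p).ncard = (RightSet H ∩ comp H p).ncard := by
  have hcompfin : (comp H p).Finite := hfin.subset (comp_subset p)
  have hinj : Set.InjOn Prod.snd (RightSet H ∩ comp H p) := by
    rintro a ⟨⟨haH, hatop⟩, hac⟩ b ⟨⟨hbH, hbtop⟩, hbc⟩ hab
    have hca : comp H a = comp H p := (comp_eq_of_reach hac).symm
    have hcb : comp H b = comp H p := (comp_eq_of_reach hbc).symm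
    have h1 : b.1 ≤ a.1 := hatop b (by rw [hca]; exact hbc) hab.symm
    have h2 : a.1 ≤ b.1 := hbtop a (by rw [hcb]; exact hac) hab
    exact Prod.ext (le_antisymm h2 h1) hab
  have himg : Prod.snd '' (RightSet H ∩ comp H p) = Prod.snd '' comp H p := by
    apply Set.Subset.antisymm
    · exact Set.image_mono Set.inter_subset_right
    · rintro y ⟨q, hq, rfl⟩
      set S : Set ℤ := {x : ℤ | (x, q.2) ∈ comp H p} with hS
      have hSfin : S.Finite := by
        have : S ⊆ Prod.fst '' comp H p := by
          rintro x hx; exact ⟨(x, q.2), hx, rfl⟩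
        exact (hcompfin.image _).subset this
      have hSne : S.Nonempty := ⟨q.1, by simpa [hS] using hq⟩
      obtain ⟨xm, hxm, hmax⟩ := Set.Finite.exists_maximalFor id S hSfin hSne
      have hmemc : (xm, q.2) ∈ comp H p := hxm
      have hmemH : (xm, q.2) ∈ H := comp_subset p hmemc
      have htop : (xm, q.2) ∈ RightSet H := by
        refine ⟨hmemH, ?_⟩
        intro r hr hr2
        have hcc : comp H (xm, q.2) = comp H p := (comp_eq_of_reach hmemc).symm
        rw [hcc] at hr
        have hrS : r.1 ∈ S := by
          have : (r.1, q.2) ∈ comp H p := by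
            have : r = (r.1, q.2) := Prod.ext rfl hr2
            rwa [← this]
          exact this
        by_contra hlt
        push_neg at hlt
        exact absurd (hmax hrS (le_of_lt hlt)) (by simp; omega)
      exact ⟨(xm, q.2), ⟨htop, hmemc⟩, rfl⟩
  rw [← himg, Set.ncard_image_of_injOn hinj]

/-- The size of a component is at most (number of top vertices) × (number of right vertices). -/
lemma comp_ncard_le (H : Set (ℤ × ℤ)) (hfin : H.Finite) {p : ℤ × ℤ} (hp : p ∈ H) :
    (comp H p).ncard ≤ (TopSet H ∩ comp H p).ncard * (RightSet H ∩ comp H p).ncard := by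
  have hsub : comp H p ⊆ (Prod.fst '' comp H p) ×ˢ (Prod.snd '' comp H p) := by
    intro q hq
    exact ⟨⟨q, hq, rfl⟩, ⟨q, hq, rfl⟩⟩
  have hcompfin : (comp H p).Finite := hfin.subset (comp_subset p)
  calc (comp H p).ncard
      ≤ ((Prod.fst '' comp H p) ×ˢ (Prod.snd '' comp H p)).ncard :=
        Set.ncard_le_ncard hsub ((hcompfin.image _).prod (hcompfin.image _))
    _ = (Prod.fst '' comp H p).ncard * (Prod.snd '' comp H p).ncard := ncard_prod_set _ _
    _ = (TopSet H ∩ comp H p).ncard * (RightSet H ∩ comp H p).ncard := by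
        rw [cols_eq_top H hfin hp, rows_eq_right H hfin hp]

lemma key_num (β sR n w h : ℝ) (hβ : 0 < β) (hs : 0 ≤ sR) (hn : 0 ≤ n) (hw : 0 ≤ w)
    (hh : 0 ≤ h) (h1 : n ≤ w * h) (h2 : n ≤ β * sR ^ 2) :
    n ≤ Real.sqrt β * sR * ((w + h) / 2) := by
  have hb : Real.sqrt β ^ 2 = β := Real.sq_sqrt hβ.le
  have hbnn : 0 ≤ Real.sqrt β := Real.sqrt_nonneg β
  have hr : 0 ≤ Real.sqrt β * sR * ((w + h) / 2) := by positivity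
  have hr2 : (Real.sqrt β * sR * ((w + h) / 2)) ^ 2 = β * sR ^ 2 * ((w + h) / 2) ^ 2 := by
    rw [mul_pow, mul_pow, hb]
  refine le_of_pow_le_pow_left₀ two_ne_zero hr ?_
  nlinarith [sq_nonneg (w - h), mul_le_mul h1 h2 hn (by positivity : (0:ℝ) ≤ w * h),
    mul_nonneg (mul_nonneg hβ.le (sq_nonneg sR)) (sq_nonneg (w - h))]


/-- Let `α, β > 0`, `s ∈ ℕ`, and `H ⊆ {1,…,s}²` with `|H| ≥ s² − αs`.
If `H_β` is the union of all connected components of the subgraph of the grid induced by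
`H` having at most `β·s²` vertices, then `|H_β| ≤ √β·(1+α)·s²`. -/
theorem small_components_cover_little (α β : ℝ) (hα : 0 < α) (hβ : 0 < β) (s : ℕ)
    (H : Set (ℤ × ℤ)) (hHsub : H ⊆ gridBox s) (hHcard : (s : ℝ)^2 - α * s ≤ (H.ncard : ℝ)) :
    (({p : ℤ × ℤ | ∃ hp : p ∈ H,
        (Nat.card {q : H // (SimpleGraph.induce H latticeGraph).Reachable ⟨p, hp⟩ q} : ℝ)
          ≤ β * (s : ℝ)^2}).ncard : ℝ)
      ≤ Real.sqrt β * (1 + α) * (s : ℝ)^2 := by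
  classical
  have hfin : H.Finite := (gridBox_finite s).subset hHsub
  -- rewrite the set in terms of `comp`
  have hset : {p : ℤ × ℤ | ∃ hp : p ∈ H,
        (Nat.card {q : H // (SimpleGraph.induce H latticeGraph).Reachable ⟨p, hp⟩ q} : ℝ)
          ≤ β * (s : ℝ)^2}
      = {p : ℤ × ℤ | p ∈ H ∧ ((comp H p).ncard : ℝ) ≤ β * (s : ℝ)^2} := by
    ext p
    constructor
    · rintro ⟨hp, hc⟩
      rw [card_reach_eq H p hp] at hc
      exact ⟨hp, hc⟩
    · rintro ⟨hp, hc⟩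
      refine ⟨hp, ?_⟩
      rw [card_reach_eq H p hp]
      exact hc
  rw [hset]
  set Hb : Set (ℤ × ℤ) := {p : ℤ × ℤ | p ∈ H ∧ ((comp H p).ncard : ℝ) ≤ β * (s : ℝ)^2}
    with hHb
  have hHbsub : Hb ⊆ H := fun p hp => hp.1
  have hHbfin : Hb.Finite := hfin.subset hHbsub
  -- membership in Hb is a component invariant
  have htrans : ∀ p ∈ Hb, ∀ q ∈ comp H p, q ∈ Hb := by
    rintro p ⟨hpH, hpc⟩ q hq
    have hqH : q ∈ H := comp_subset p hq
    have : comp H q = comp H p := (comp_eq_of_reach hq).symm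
    exact ⟨hqH, by rw [this]; exact hpc⟩
  have hcomp_of_mem : ∀ p : ℤ × ℤ, ∀ q ∈ comp H p, comp H q = comp H p :=
    fun p q hq => (comp_eq_of_reach hq).symm
  -- Finsets
  set Hbf : Finset (ℤ × ℤ) := hHbfin.toFinset with hHbf
  have htopfin : (TopSet H).Finite := hfin.subset (topSet_subset H)
  have hrightfin : (RightSet H).Finite := hfin.subset (rightSet_subset H)
  set Topf : Finset (ℤ × ℤ) := htopfin.toFinset with hTopf
  set Rightf : Finset (ℤ × ℤ) := hrightfin.toFinset with hRightf
  set f : ℤ × ℤ → Set (ℤ × ℤ) := fun p => comp H p with hf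
  set t : Finset (Set (ℤ × ℤ)) := Hbf.image f with ht
  -- fiber descriptions
  have hfiber : ∀ c ∈ t, ∀ p ∈ Hb, f p = c →
      (↑(Hbf.filter (fun q => f q = c)) : Set (ℤ × ℤ)) = comp H p := by
    intro c hc p hpHb hpc
    ext q
    simp only [Finset.coe_filter, Set.mem_setOf_eq, Set.Finite.mem_toFinset, hHbf]
    constructor
    · rintro ⟨hqHb, hqc⟩
      have : q ∈ comp H q := mem_comp_self hqHb.1
      rw [show f q = comp H q from rfl] at hqc
      rw [← hpc] at hqc
      rw [hqc] at this
      exact this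
    · intro hq
      rw [← hpc]
      exact ⟨htrans p hpHb q hq, hcomp_of_mem p q hq⟩
  have hfiberTop : ∀ c ∈ t, ∀ p ∈ Hb, f p = c →
      (↑((Hbf ∩ Topf).filter (fun q => f q = c)) : Set (ℤ × ℤ)) = TopSet H ∩ comp H p := by
    intro c hc p hpHb hpc
    ext q
    simp only [Finset.coe_filter, Set.mem_setOf_eq, Finset.mem_inter,
      Set.Finite.mem_toFinset, hHbf, hTopf, Set.mem_inter_iff]
    constructor
    · rintro ⟨⟨hqHb, hqT⟩, hqc⟩
      have hqmem : q ∈ comp H q := mem_comp_self hqHb.1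
      rw [show f q = comp H q from rfl, ← hpc] at hqc
      rw [hqc] at hqmem
      exact ⟨hqT, hqmem⟩
    · rintro ⟨hqT, hq⟩
      rw [← hpc]
      exact ⟨⟨htrans p hpHb q hq, hqT⟩, hcomp_of_mem p q hq⟩
  have hfiberRight : ∀ c ∈ t, ∀ p ∈ Hb, f p = c →
      (↑((Hbf ∩ Rightf).filter (fun q => f q = c)) : Set (ℤ × ℤ)) = RightSet H ∩ comp H p := by
    intro c hc p hpHb hpc
    ext q
    simp only [Finset.coe_filter, Set.mem_setOf_eq, Finset.mem_inter,
      Set.Finite.mem_toFinset, hHbf, hRightf, Set.mem_inter_iff]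
    constructor
    · rintro ⟨⟨hqHb, hqT⟩, hqc⟩
      have hqmem : q ∈ comp H q := mem_comp_self hqHb.1
      rw [show f q = comp H q from rfl, ← hpc] at hqc
      rw [hqc] at hqmem
      exact ⟨hqT, hqmem⟩
    · rintro ⟨hqT, hq⟩
      rw [← hpc]
      exact ⟨⟨htrans p hpHb q hq, hqT⟩, hcomp_of_mem p q hq⟩
  -- fiberwise sums
  have hmapsto : ∀ x ∈ Hbf, f x ∈ t := fun x hx => Finset.mem_image_of_mem f hx
  have E1 : Hbf.card = ∑ c ∈ t, (Hbf.filter (fun q => f q = c)).card :=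
    Finset.card_eq_sum_card_fiberwise hmapsto
  have hmapsto2 : ∀ x ∈ Hbf ∩ Topf, f x ∈ t :=
    fun x hx => hmapsto x (Finset.mem_of_mem_inter_left hx)
  have E2 : (Hbf ∩ Topf).card = ∑ c ∈ t, ((Hbf ∩ Topf).filter (fun q => f q = c)).card :=
    Finset.card_eq_sum_card_fiberwise hmapsto2
  have hmapsto3 : ∀ x ∈ Hbf ∩ Rightf, f x ∈ t :=
    fun x hx => hmapsto x (Finset.mem_of_mem_inter_left hx)
  have E3 : (Hbf ∩ Rightf).card = ∑ c ∈ t, ((Hbf ∩ Rightf).filter (fun q => f q = c)).card :=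
    Finset.card_eq_sum_card_fiberwise hmapsto3
  -- the boundary bound
  have hDbound : ((gridBox s \ H).ncard : ℝ) ≤ α * s := by
    have h1 : ((gridBox s \ H).ncard : ℝ) = ((gridBox s).ncard : ℝ) - (H.ncard : ℝ) :=
      Set.cast_ncard_sdiff hHsub (gridBox_finite s)
    rw [h1, gridBox_ncard]
    push_cast
    linarith
  have hTopBound : ((TopSet H).ncard : ℝ) ≤ α * s + s := by
    have := topSet_ncard_le s H hHsub
    have h2 : ((TopSet H).ncard : ℝ) ≤ ((gridBox s \ H).ncard : ℝ) + s := by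
      exact_mod_cast Nat.cast_le.mpr this
    linarith
  have hRightBound : ((RightSet H).ncard : ℝ) ≤ α * s + s := by
    have := rightSet_ncard_le s H hHsub
    have h2 : ((RightSet H).ncard : ℝ) ≤ ((gridBox s \ H).ncard : ℝ) + s := by
      exact_mod_cast Nat.cast_le.mpr this
    linarith
  -- per-fiber inequality
  have hperc : ∀ c ∈ t,
      ((Hbf.filter (fun q => f q = c)).card : ℝ)
        ≤ Real.sqrt β * s * ((((Hbf ∩ Topf).filter (fun q => f q = c)).card
            + ((Hbf ∩ Rightf).filter (fun q => f q = c)).card : ℝ) / 2) := by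
    intro c hc
    obtain ⟨p, hpHbf, hpc⟩ := Finset.mem_image.mp hc
    have hpHb : p ∈ Hb := (Set.Finite.mem_toFinset hHbfin).mp hpHbf
    have hn : (Hbf.filter (fun q => f q = c)).card = (comp H p).ncard := by
      rw [← Set.ncard_coe_finset, hfiber c hc p hpHb hpc]
    have hw : ((Hbf ∩ Topf).filter (fun q => f q = c)).card
        = (TopSet H ∩ comp H p).ncard := by
      rw [← Set.ncard_coe_finset, hfiberTop c hc p hpHb hpc]
    have hh : ((Hbf ∩ Rightf).filter (fun q => f q = c)).card
        = (RightSet H ∩ comp H p).ncard := by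
      rw [← Set.ncard_coe_finset, hfiberRight c hc p hpHb hpc]
    rw [hn, hw, hh]
    have h1 : ((comp H p).ncard : ℝ)
        ≤ ((TopSet H ∩ comp H p).ncard : ℝ) * ((RightSet H ∩ comp H p).ncard : ℝ) := by
      exact_mod_cast Nat.cast_le.mpr (comp_ncard_le H hfin hpHb.1)
    exact key_num β s _ _ _ hβ (Nat.cast_nonneg s) (Nat.cast_nonneg _) (Nat.cast_nonneg _)
      (Nat.cast_nonneg _) h1 hpHb.2
  -- assemble
  have hcardHb : (Hb.ncard : ℝ) = (Hbf.card : ℝ) := by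
    rw [hHbf, ← Set.ncard_coe_finset, Set.Finite.coe_toFinset]
  rw [hcardHb]
  have hsum : (Hbf.card : ℝ)
      ≤ Real.sqrt β * s * ((((Hbf ∩ Topf).card : ℝ) + ((Hbf ∩ Rightf).card : ℝ)) / 2) := by
    calc (Hbf.card : ℝ)
        = ∑ c ∈ t, ((Hbf.filter (fun q => f q = c)).card : ℝ) := by
          rw [E1]; push_cast; ring
      _ ≤ ∑ c ∈ t, Real.sqrt β * s * ((((Hbf ∩ Topf).filter (fun q => f q = c)).card
            + ((Hbf ∩ Rightf).filter (fun q => f q = c)).card : ℝ) / 2) :=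
          Finset.sum_le_sum hperc
      _ = Real.sqrt β * s * ((((Hbf ∩ Topf).card : ℝ) + ((Hbf ∩ Rightf).card : ℝ)) / 2) := by
          rw [E2, E3]
          push_cast
          rw [← Finset.mul_sum, ← Finset.sum_div, Finset.sum_add_distrib]
  have hTopf_le : ((Hbf ∩ Topf).card : ℝ) ≤ α * s + s := by
    have h1 : (Hbf ∩ Topf).card ≤ Topf.card :=
      Finset.card_le_card (Finset.inter_subset_right)
    have h2 : (Topf.card : ℝ) = ((TopSet H).ncard : ℝ) := by
      rw [hTopf, ← Set.ncard_coe_finset, Set.Finite.coe_toFinset]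
    calc ((Hbf ∩ Topf).card : ℝ) ≤ (Topf.card : ℝ) := Nat.cast_le.mpr h1
      _ = ((TopSet H).ncard : ℝ) := h2
      _ ≤ α * s + s := hTopBound
  have hRightf_le : ((Hbf ∩ Rightf).card : ℝ) ≤ α * s + s := by
    have h1 : (Hbf ∩ Rightf).card ≤ Rightf.card :=
      Finset.card_le_card (Finset.inter_subset_right)
    have h2 : (Rightf.card : ℝ) = ((RightSet H).ncard : ℝ) := by
      rw [hRightf, ← Set.ncard_coe_finset, Set.Finite.coe_toFinset]
    calc ((Hbf ∩ Rightf).card : ℝ) ≤ (Rightf.card : ℝ) := Nat.cast_le.mpr h1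
      _ = ((RightSet H).ncard : ℝ) := h2
      _ ≤ α * s + s := hRightBound
  have hsq : 0 ≤ Real.sqrt β * s := by positivity
  calc (Hbf.card : ℝ)
      ≤ Real.sqrt β * s * ((((Hbf ∩ Topf).card : ℝ) + ((Hbf ∩ Rightf).card : ℝ)) / 2) := hsum
    _ ≤ Real.sqrt β * s * (((α * s + s) + (α * s + s)) / 2) := by
        apply mul_le_mul_of_nonneg_left _ hsq
        linarith
    _ = Real.sqrt β * (1 + α) * (s : ℝ)^2 := by ring


end
end

section
/- Let α > 0 be a real number, s ∈ ℕ, and let H ⊆ {1,…,s}² with |H| ≥ s² − α·s. Then the number of edges of the integer lattice graph with one endpoint in H and the other endpoint in ℤ²∖H is at most 4·(1+α)·s. -/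
open Filter Topology

noncomputable section

/-- auxiliary: the four unit vectors -/
def deltas : Finset (ℤ × ℤ) := {(1,0),(-1,0),(0,1),(0,-1)}

lemma sq_add_sq_eq_one' {a b : ℤ} (h : a^2 + b^2 = 1) :
    (a = 1 ∧ b = 0) ∨ (a = -1 ∧ b = 0) ∨ (a = 0 ∧ b = 1) ∨ (a = 0 ∧ b = -1) := by
  have ha1 : -1 ≤ a := by nlinarith [sq_nonneg b, sq_nonneg a]
  have ha2 : a ≤ 1 := by nlinarith [sq_nonneg b, sq_nonneg a]
  have hb1 : -1 ≤ b := by nlinarith [sq_nonneg b, sq_nonneg a]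
  have hb2 : b ≤ 1 := by nlinarith [sq_nonneg b, sq_nonneg a]
  interval_cases a <;> interval_cases b <;> omega

lemma adj_sub_mem_deltas {p q : ℤ × ℤ} (h : latticeAdj p q) : q - p ∈ deltas := by
  unfold latticeAdj at h
  have h1 : ((p.1 - q.1 : ℤ) : ℝ)^2 + ((p.2 - q.2 : ℤ) : ℝ)^2 = 1 := Real.sqrt_eq_one.mp h
  have h2 : (p.1 - q.1)^2 + (p.2 - q.2)^2 = 1 := by exact_mod_cast h1
  have h3 := sq_add_sq_eq_one' h2
  have hq1 : (q - p).1 = -(p.1 - q.1) := by simp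
  have hq2 : (q - p).2 = -(p.2 - q.2) := by simp
  simp only [deltas, Finset.mem_insert, Finset.mem_singleton, Prod.ext_iff, hq1, hq2]
  rcases h3 with ⟨h,h'⟩|⟨h,h'⟩|⟨h,h'⟩|⟨h,h'⟩ <;> simp [h, h']

/-- If `H ⊆ {1,…,s}²` has `|H| ≥ s² − αs`, then the number of lattice
edges between `H` and its complement in `ℤ²` is at most `4·(1+α)·s`. -/
theorem edge_boundary_upper_bound (α : ℝ) (hα : 0 < α) (s : ℕ)
    (H : Set (ℤ × ℤ)) (hHsub : H ⊆ gridBox s) (hHcard : (s : ℝ)^2 - α * s ≤ (H.ncard : ℝ)) :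
    (eBnd H : ℝ) ≤ 4 * (1 + α) * s := by
  classical
  set B : Finset (ℤ × ℤ) := Finset.Icc (1:ℤ) (s:ℤ) ×ˢ Finset.Icc (1:ℤ) (s:ℤ) with hB
  have hmemB : ∀ p : ℤ × ℤ, p ∈ gridBox s ↔ p ∈ B := by
    intro p
    simp [gridBox, hB, Set.mem_prod, Finset.mem_product, Finset.mem_Icc, Set.mem_Icc, Prod.le_def]
    tauto
  have hHB : ∀ p ∈ H, p ∈ B := fun p hp => (hmemB p).1 (hHsub hp)
  have hHfin : H.Finite := Set.Finite.subset B.finite_toSet (fun p hp => hHB p hp)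
  set T1 : Finset ((ℤ×ℤ) × (ℤ×ℤ)) :=
    ((B.filter (fun p => p ∉ H)) ×ˢ deltas).image (fun x => (x.1 + x.2, x.1)) with hT1
  set T2 : Finset ((ℤ×ℤ) × (ℤ×ℤ)) :=
    (((B ×ˢ deltas).filter (fun x => x.1 + x.2 ∉ B))).image (fun x => (x.1, x.1 + x.2)) with hT2
  have hsub : {e : (ℤ×ℤ) × (ℤ×ℤ) | e.1 ∈ H ∧ e.2 ∉ H ∧ latticeAdj e.1 e.2} ⊆ ↑(T1 ∪ T2) := by
    rintro ⟨p,q⟩ ⟨hp, hq, hadj⟩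
    simp only [Finset.coe_union, Set.mem_union, Finset.mem_coe]
    by_cases hqB : q ∈ B
    · left
      refine Finset.mem_image.2 ⟨(q, p - q), ?_, ?_⟩
      · refine Finset.mem_product.2 ⟨Finset.mem_filter.2 ⟨hqB, hq⟩, ?_⟩
        exact adj_sub_mem_deltas (latticeAdj_symm hadj)
      · simp
    · right
      refine Finset.mem_image.2 ⟨(p, q - p), ?_, ?_⟩
      · refine Finset.mem_filter.2 ⟨Finset.mem_product.2 ⟨hHB p hp, adj_sub_mem_deltas hadj⟩, ?_⟩
        simpa using hqB
      · simp
  have h1 : eBnd H ≤ (T1 ∪ T2).card := by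
    rw [eBnd, ← Set.ncard_coe_finset]
    exact Set.ncard_le_ncard hsub (Finset.finite_toSet _)
  -- bound T1
  have hc1 : T1.card ≤ (B.filter (fun p => p ∉ H)).card * 4 := by
    calc T1.card ≤ ((B.filter (fun p => p ∉ H)) ×ˢ deltas).card := Finset.card_image_le
    _ = (B.filter (fun p => p ∉ H)).card * deltas.card := Finset.card_product _ _
    _ = (B.filter (fun p => p ∉ H)).card * 4 := by norm_num [deltas]
  -- bound T2
  have hline : ∀ d ∈ deltas, (B.filter (fun p => p + d ∉ B)).card = s := by
    intro d hd
    have hcard : ∀ x : ℤ, (({x} : Finset ℤ) ×ˢ Finset.Icc (1:ℤ) (s:ℤ)).card = s := by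
      intro x
      rw [Finset.card_product]
      simp [Int.card_Icc]
    have hcard' : ∀ x : ℤ, ((Finset.Icc (1:ℤ) (s:ℤ)) ×ˢ ({x} : Finset ℤ)).card = s := by
      intro x
      rw [Finset.card_product]
      simp [Int.card_Icc]
    fin_cases hd
    · rw [show (B.filter (fun p => p + ((1:ℤ),(0:ℤ)) ∉ B)) = ({(s:ℤ)} : Finset ℤ) ×ˢ Finset.Icc (1:ℤ) (s:ℤ) by
        ext ⟨a,b⟩
        simp only [hB, Finset.mem_filter, Finset.mem_product, Finset.mem_Icc, Prod.mk_add_mk,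
          Finset.mem_singleton, not_and]
        constructor
        · rintro ⟨⟨⟨h1,h2⟩,⟨h3,h4⟩⟩, h5⟩; omega
        · rintro ⟨h1, h2, h3⟩; refine ⟨⟨⟨?_,?_⟩,⟨h2,h3⟩⟩, ?_⟩ <;> omega]
      exact hcard _
    · rw [show (B.filter (fun p => p + ((-1:ℤ),(0:ℤ)) ∉ B)) = ({(1:ℤ)} : Finset ℤ) ×ˢ Finset.Icc (1:ℤ) (s:ℤ) by
        ext ⟨a,b⟩
        simp only [hB, Finset.mem_filter, Finset.mem_product, Finset.mem_Icc, Prod.mk_add_mk,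
          Finset.mem_singleton, not_and]
        constructor
        · rintro ⟨⟨⟨h1,h2⟩,⟨h3,h4⟩⟩, h5⟩; omega
        · rintro ⟨h1, h2, h3⟩; refine ⟨⟨⟨?_,?_⟩,⟨h2,h3⟩⟩, ?_⟩ <;> omega]
      exact hcard _
    · rw [show (B.filter (fun p => p + ((0:ℤ),(1:ℤ)) ∉ B)) = (Finset.Icc (1:ℤ) (s:ℤ)) ×ˢ ({(s:ℤ)} : Finset ℤ) by
        ext ⟨a,b⟩
        simp only [hB, Finset.mem_filter, Finset.mem_product, Finset.mem_Icc, Prod.mk_add_mk,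
          Finset.mem_singleton, not_and]
        constructor
        · rintro ⟨⟨⟨h1,h2⟩,⟨h3,h4⟩⟩, h5⟩; omega
        · rintro ⟨⟨h1,h2⟩, h3⟩; refine ⟨⟨⟨h1,h2⟩,⟨?_,?_⟩⟩, ?_⟩ <;> omega]
      exact hcard' _
    · rw [show (B.filter (fun p => p + ((0:ℤ),(-1:ℤ)) ∉ B)) = (Finset.Icc (1:ℤ) (s:ℤ)) ×ˢ ({(1:ℤ)} : Finset ℤ) by
        ext ⟨a,b⟩
        simp only [hB, Finset.mem_filter, Finset.mem_product, Finset.mem_Icc, Prod.mk_add_mk,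
          Finset.mem_singleton, not_and]
        constructor
        · rintro ⟨⟨⟨h1,h2⟩,⟨h3,h4⟩⟩, h5⟩; omega
        · rintro ⟨⟨h1,h2⟩, h3⟩; refine ⟨⟨⟨h1,h2⟩,⟨?_,?_⟩⟩, ?_⟩ <;> omega]
      exact hcard' _
  have hc2 : T2.card ≤ 4 * s := by
    have hsubU : ((B ×ˢ deltas).filter (fun x => x.1 + x.2 ∉ B)) ⊆
        deltas.biUnion (fun d => (B.filter (fun p => p + d ∉ B)).image (fun p => (p, d))) := by
      rintro ⟨p,d⟩ hx
      rw [Finset.mem_filter, Finset.mem_product] at hx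
      exact Finset.mem_biUnion.2 ⟨d, hx.1.2,
        Finset.mem_image.2 ⟨p, Finset.mem_filter.2 ⟨hx.1.1, hx.2⟩, rfl⟩⟩
    calc T2.card ≤ ((B ×ˢ deltas).filter (fun x => x.1 + x.2 ∉ B)).card := Finset.card_image_le
    _ ≤ (deltas.biUnion (fun d => (B.filter (fun p => p + d ∉ B)).image (fun p => (p, d)))).card :=
        Finset.card_le_card hsubU
    _ ≤ ∑ d ∈ deltas, ((B.filter (fun p => p + d ∉ B)).image (fun p => (p, d))).card :=
        Finset.card_biUnion_le
    _ ≤ ∑ d ∈ deltas, (B.filter (fun p => p + d ∉ B)).card :=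
        Finset.sum_le_sum (fun d _ => Finset.card_image_le)
    _ = ∑ d ∈ deltas, s := Finset.sum_congr rfl hline
    _ = 4 * s := by norm_num [deltas]
  -- cardinalities
  set HF : Finset (ℤ×ℤ) := hHfin.toFinset with hHF
  have hHFB : HF ⊆ B := by
    intro p hp
    exact hHB p (by simpa [hHF, Set.Finite.mem_toFinset] using hp)
  have hfilter_eq : B.filter (fun p => p ∉ H) = B \ HF := by
    ext p
    simp [hHF, Set.Finite.mem_toFinset, Finset.mem_sdiff]
  have hBcard : B.card = s * s := by
    rw [hB, Finset.card_product]
    simp [Int.card_Icc]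
  have hHncard : H.ncard = HF.card := Set.ncard_eq_toFinset_card H hHfin
  have hm : (B.filter (fun p => p ∉ H)).card = s * s - HF.card := by
    rw [hfilter_eq, Finset.card_sdiff_of_subset hHFB, hBcard]
  have hHle : HF.card ≤ s * s := hBcard ▸ Finset.card_le_card hHFB
  -- real arithmetic
  have hmR : ((B.filter (fun p => p ∉ H)).card : ℝ) ≤ α * s := by
    rw [hm]
    rw [Nat.cast_sub hHle]
    push_cast
    rw [hHncard] at hHcard
    push_cast at hHcard
    nlinarith
  have htot : (eBnd H : ℝ) ≤ ((B.filter (fun p => p ∉ H)).card : ℝ) * 4 + 4 * s := by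
    have := Finset.card_union_le T1 T2
    have hnum : (eBnd H : ℝ) ≤ (T1.card : ℝ) + T2.card := by
      have : eBnd H ≤ T1.card + T2.card := le_trans h1 (Finset.card_union_le T1 T2)
      exact_mod_cast this
    have hc1R : (T1.card : ℝ) ≤ ((B.filter (fun p => p ∉ H)).card : ℝ) * 4 := by exact_mod_cast hc1
    have hc2R : (T2.card : ℝ) ≤ 4 * s := by exact_mod_cast hc2
    linarith
  nlinarith [htot, hmR]

end
end

section
/- For every ε ∈ (0,1) and every α > 0 there exists k = k(ε,α) ∈ ℕ and s₀ ∈ ℕ such that for all integers s ≥ s₀ the following holds: for every H ⊆ {1,…,s}² with |H| ≥ s² − α·s, the sum of the sizes of the k largest connected components of the subgraph of the grid graph induced by H (the sum of all component sizes if there are fewer than k components) is at least (1−ε)·s². Moreover, if α ≤ ε/2 then one may take k = 1. -/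
open Filter Topology

set_option maxHeartbeats 2000000

noncomputable section

lemma induce_adj_of {H : Set (ℤ × ℤ)} {p q : ℤ × ℤ} (hp : p ∈ H) (hq : q ∈ H)
    (h : latticeAdj p q) :
    (SimpleGraph.induce H latticeGraph).Adj ⟨p, hp⟩ ⟨q, hq⟩ := h

lemma reach_seg_right (H : Set (ℤ × ℤ)) (y a : ℤ) :
    ∀ b : ℤ, a ≤ b →
      (∀ x : ℤ, a ≤ x → x ≤ b → ((x, y) : ℤ × ℤ) ∈ H) →
      ∀ (ha : ((a, y) : ℤ × ℤ) ∈ H) (hb : ((b, y) : ℤ × ℤ) ∈ H),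
        (SimpleGraph.induce H latticeGraph).Reachable ⟨(a, y), ha⟩ ⟨(b, y), hb⟩ := by
  refine Int.le_induction ?_ ?_
  · intro _ _ _; exact SimpleGraph.Reachable.refl _
  · intro b hab IH hseg ha hb1
    have hbH : ((b, y) : ℤ × ℤ) ∈ H := hseg b hab (by omega)
    have h1 := IH (fun x hx hx' => hseg x hx (by omega)) ha hbH
    exact h1.trans (SimpleGraph.Adj.reachable (induce_adj_of hbH hb1 (latticeAdj_right b y)))

lemma reach_seg_up (H : Set (ℤ × ℤ)) (x a : ℤ) :
    ∀ b : ℤ, a ≤ b →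
      (∀ y : ℤ, a ≤ y → y ≤ b → ((x, y) : ℤ × ℤ) ∈ H) →
      ∀ (ha : ((x, a) : ℤ × ℤ) ∈ H) (hb : ((x, b) : ℤ × ℤ) ∈ H),
        (SimpleGraph.induce H latticeGraph).Reachable ⟨(x, a), ha⟩ ⟨(x, b), hb⟩ := by
  refine Int.le_induction ?_ ?_
  · intro _ _ _; exact SimpleGraph.Reachable.refl _
  · intro b hab IH hseg ha hb1
    have hbH : ((x, b) : ℤ × ℤ) ∈ H := hseg b hab (by omega)
    have h1 := IH (fun z hz hz' => hseg z hz (by omega)) ha hbH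
    exact h1.trans (SimpleGraph.Adj.reachable (induce_adj_of hbH hb1 (latticeAdj_up x b)))

lemma reach_horiz (H : Set (ℤ × ℤ)) (y lo hi x1 x2 : ℤ)
    (h1 : x1 ∈ Set.Icc lo hi) (h2 : x2 ∈ Set.Icc lo hi)
    (hseg : ∀ x ∈ Set.Icc lo hi, ((x, y) : ℤ × ℤ) ∈ H)
    (hm1 : ((x1, y) : ℤ × ℤ) ∈ H) (hm2 : ((x2, y) : ℤ × ℤ) ∈ H) :
    (SimpleGraph.induce H latticeGraph).Reachable ⟨(x1, y), hm1⟩ ⟨(x2, y), hm2⟩ := by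
  rcases le_total x1 x2 with h | h
  · exact reach_seg_right H y x1 x2 h
      (fun x hx hx' => hseg x ⟨le_trans h1.1 hx, le_trans hx' h2.2⟩) hm1 hm2
  · exact (reach_seg_right H y x2 x1 h
      (fun x hx hx' => hseg x ⟨le_trans h2.1 hx, le_trans hx' h1.2⟩) hm2 hm1).symm

lemma reach_vert (H : Set (ℤ × ℤ)) (x lo hi y1 y2 : ℤ)
    (h1 : y1 ∈ Set.Icc lo hi) (h2 : y2 ∈ Set.Icc lo hi)
    (hseg : ∀ y ∈ Set.Icc lo hi, ((x, y) : ℤ × ℤ) ∈ H)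
    (hm1 : ((x, y1) : ℤ × ℤ) ∈ H) (hm2 : ((x, y2) : ℤ × ℤ) ∈ H) :
    (SimpleGraph.induce H latticeGraph).Reachable ⟨(x, y1), hm1⟩ ⟨(x, y2), hm2⟩ := by
  rcases le_total y1 y2 with h | h
  · exact reach_seg_up H x y1 y2 h
      (fun z hz hz' => hseg z ⟨le_trans h1.1 hz, le_trans hz' h2.2⟩) hm1 hm2
  · exact (reach_seg_up H x y2 y1 h
      (fun z hz hz' => hseg z ⟨le_trans h2.1 hz, le_trans hz' h1.2⟩) hm2 hm1).symm

def box (a b : ℤ) (n : ℕ) : Set (ℤ × ℤ) := Set.Icc (a+1) (a+n) ×ˢ Set.Icc (b+1) (b+n)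

lemma box_finite (a b : ℤ) (n : ℕ) : (box a b n).Finite :=
  (Set.finite_Icc _ _).prod (Set.finite_Icc _ _)

lemma ncard_Icc_int_s10 (a : ℤ) (n : ℕ) : (Set.Icc (a+1) (a+(n:ℤ))).ncard = n := by
  rw [← Finset.coe_Icc, Set.ncard_coe_finset, Int.card_Icc]
  omega

lemma box_ncard (a b : ℤ) (n : ℕ) : (box a b n).ncard = n * n := by
  rw [box, ← Finset.coe_Icc, ← Finset.coe_Icc, ← Finset.coe_product, Set.ncard_coe_finset,
    Finset.card_product, Int.card_Icc, Int.card_Icc]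
  have h1 : ((a + n + 1 - (a+1)).toNat) = n := by omega
  have h2 : ((b + n + 1 - (b+1)).toNat) = n := by omega
  rw [h1, h2]

lemma ncard_prod_set_s10 {X Y : Type*} (s : Set X) (t : Set Y) (hs : s.Finite) (ht : t.Finite) :
    (s ×ˢ t).ncard = s.ncard * t.ncard := by
  rw [Set.ncard_eq_toFinset_card _ (hs.prod ht), Set.ncard_eq_toFinset_card _ hs,
    Set.ncard_eq_toFinset_card _ ht, ← Finset.card_product]
  congr 1
  ext p
  simp [Set.Finite.mem_toFinset, Set.mem_prod]

lemma sum_ncard_le_ncard {ι X : Type*} (F : Finset ι) (A : ι → Set X) :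
    ∀ (U : Set X), U.Finite → (∀ i ∈ F, A i ⊆ U) →
      (∀ i ∈ F, ∀ j ∈ F, i ≠ j → Disjoint (A i) (A j)) →
      ∑ i ∈ F, (A i).ncard ≤ U.ncard := by
  classical
  induction F using Finset.induction with
  | empty => intro U _ _ _; simp
  | @insert i s hnotmem ih =>
    intro U hU hsub hdisj
    rw [Finset.sum_insert hnotmem]
    have hiU : A i ⊆ U := hsub i (Finset.mem_insert_self i s)
    have h1 : ∀ j ∈ s, A j ⊆ U \ A i := by
      intro j hj x hx
      refine ⟨hsub j (Finset.mem_insert_of_mem hj) hx, fun hxi => ?_⟩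
      exact Set.disjoint_left.mp
        (hdisj j (Finset.mem_insert_of_mem hj) i (Finset.mem_insert_self i s)
          (by rintro rfl; exact hnotmem hj)) hx hxi
    have h2 := ih (U \ A i) hU.diff h1
      (fun a ha b hb hab => hdisj a (Finset.mem_insert_of_mem ha) b (Finset.mem_insert_of_mem hb) hab)
    have h3 : (U \ A i).ncard + (A i).ncard = U.ncard :=
      Set.ncard_diff_add_ncard_of_subset hiU hU
    omega

lemma core_lemma (H : Set (ℤ × ℤ)) (a b : ℤ) (n : ℕ)
    (hm : (box a b n \ H).ncard < n) :
    ∃ C : (SimpleGraph.induce H latticeGraph).ConnectedComponent,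
      n * n ≤ (Subtype.val '' C.supp ∩ box a b n).ncard
        + (box a b n \ H).ncard * (box a b n \ H).ncard := by
  classical
  set M : Set (ℤ × ℤ) := box a b n \ H with hMdef
  have hMfin : M.Finite := (box_finite a b n).subset Set.diff_subset
  set m : ℕ := M.ncard with hmdef
  set badC : Set ℤ := Prod.fst '' M with hbadC
  set badR : Set ℤ := Prod.snd '' M with hbadR
  have hbadCfin : badC.Finite := hMfin.image _
  have hbadRfin : badR.Finite := hMfin.image _
  have hbadCcard : badC.ncard ≤ m := Set.ncard_image_le hMfin
  have hbadRcard : badR.ncard ≤ m := Set.ncard_image_le hMfin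
  set colIcc : Set ℤ := Set.Icc (a+1) (a+(n:ℤ)) with hcolIcc
  set rowIcc : Set ℤ := Set.Icc (b+1) (b+(n:ℤ)) with hrowIcc
  -- membership facts
  have hmemH : ∀ x y : ℤ, x ∈ colIcc → y ∈ rowIcc → ((x, y) : ℤ × ℤ) ∉ M →
      ((x, y) : ℤ × ℤ) ∈ H := by
    intro x y hx hy hnM
    by_contra hnH
    exact hnM ⟨⟨hx, hy⟩, hnH⟩
  have hrowH : ∀ y : ℤ, y ∈ rowIcc → y ∉ badR → ∀ x ∈ colIcc, ((x, y) : ℤ × ℤ) ∈ H := by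
    intro y hy hnb x hx
    refine hmemH x y hx hy (fun hM => hnb ⟨(x, y), hM, rfl⟩)
  have hcolH : ∀ x : ℤ, x ∈ colIcc → x ∉ badC → ∀ y ∈ rowIcc, ((x, y) : ℤ × ℤ) ∈ H := by
    intro x hx hnb y hy
    refine hmemH x y hx hy (fun hM => hnb ⟨(x, y), hM, rfl⟩)
  -- existence of good row / column
  have hgoodrow : ∃ y0 ∈ rowIcc, y0 ∉ badR := by
    by_contra hcon
    push_neg at hcon
    have hsub : rowIcc ⊆ badR := hcon
    have := Set.ncard_le_ncard hsub hbadRfin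
    rw [hrowIcc, ncard_Icc_int_s10] at this
    omega
  have hgoodcol : ∃ x0 ∈ colIcc, x0 ∉ badC := by
    by_contra hcon
    push_neg at hcon
    have hsub : colIcc ⊆ badC := hcon
    have := Set.ncard_le_ncard hsub hbadCfin
    rw [hcolIcc, ncard_Icc_int_s10] at this
    omega
  obtain ⟨y0, hy0I, hy0g⟩ := hgoodrow
  obtain ⟨x0, hx0I, hx0g⟩ := hgoodcol
  have hp0 : ((x0, y0) : ℤ × ℤ) ∈ H := hrowH y0 hy0I hy0g x0 hx0I
  set C := (SimpleGraph.induce H latticeGraph).connectedComponentMk ⟨(x0, y0), hp0⟩ with hC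
  refine ⟨C, ?_⟩
  -- good points are in the component
  have hG : ∀ x y : ℤ, x ∈ colIcc → y ∈ rowIcc → (x ∉ badC ∨ y ∉ badR) →
      ((x, y) : ℤ × ℤ) ∈ Subtype.val '' C.supp := by
    intro x y hx hy hgood
    rcases hgood with hxg | hyg
    · have hxyH : ((x, y) : ℤ × ℤ) ∈ H := hcolH x hx hxg y hy
      have hx_y0 : ((x, y0) : ℤ × ℤ) ∈ H := hcolH x hx hxg y0 hy0I
      have r1 : (SimpleGraph.induce H latticeGraph).Reachable ⟨(x, y), hxyH⟩ ⟨(x, y0), hx_y0⟩ :=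
        reach_vert H x (b+1) (b+n) y y0 hy hy0I (hcolH x hx hxg) hxyH hx_y0
      have r2 : (SimpleGraph.induce H latticeGraph).Reachable ⟨(x, y0), hx_y0⟩ ⟨(x0, y0), hp0⟩ :=
        reach_horiz H y0 (a+1) (a+n) x x0 hx hx0I (fun x' hx' => hrowH y0 hy0I hy0g x' hx') hx_y0 hp0
      refine ⟨⟨(x, y), hxyH⟩, ?_, rfl⟩
      rw [SimpleGraph.ConnectedComponent.mem_supp_iff, hC]
      exact SimpleGraph.ConnectedComponent.sound (r1.trans r2)
    · have hxyH : ((x, y) : ℤ × ℤ) ∈ H := hrowH y hy hyg x hx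
      have hx0_y : ((x0, y) : ℤ × ℤ) ∈ H := hrowH y hy hyg x0 hx0I
      have r1 : (SimpleGraph.induce H latticeGraph).Reachable ⟨(x, y), hxyH⟩ ⟨(x0, y), hx0_y⟩ :=
        reach_horiz H y (a+1) (a+n) x x0 hx hx0I (fun x' hx' => hrowH y hy hyg x' hx') hxyH hx0_y
      have r2 : (SimpleGraph.induce H latticeGraph).Reachable ⟨(x0, y), hx0_y⟩ ⟨(x0, y0), hp0⟩ :=
        reach_vert H x0 (b+1) (b+n) y y0 hy hy0I (hcolH x0 hx0I hx0g) hx0_y hp0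
      refine ⟨⟨(x, y), hxyH⟩, ?_, rfl⟩
      rw [SimpleGraph.ConnectedComponent.mem_supp_iff, hC]
      exact SimpleGraph.ConnectedComponent.sound (r1.trans r2)
  -- covering
  have hcover : box a b n ⊆ (Subtype.val '' C.supp ∩ box a b n) ∪ (badC ×ˢ badR) := by
    rintro ⟨x, y⟩ hxy
    have hx : x ∈ colIcc := hxy.1
    have hy : y ∈ rowIcc := hxy.2
    by_cases hb : x ∈ badC ∧ y ∈ badR
    · exact Or.inr hb
    · rw [not_and_or] at hb
      exact Or.inl ⟨hG x y hx hy hb, hxy⟩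
  have hGfin : (Subtype.val '' C.supp ∩ box a b n).Finite :=
    (box_finite a b n).subset Set.inter_subset_right
  have hPfin : (badC ×ˢ badR).Finite := hbadCfin.prod hbadRfin
  calc n * n = (box a b n).ncard := (box_ncard a b n).symm
    _ ≤ ((Subtype.val '' C.supp ∩ box a b n) ∪ (badC ×ˢ badR)).ncard :=
        Set.ncard_le_ncard hcover (hGfin.union hPfin)
    _ ≤ (Subtype.val '' C.supp ∩ box a b n).ncard + (badC ×ˢ badR).ncard :=
        Set.ncard_union_le _ _
    _ ≤ (Subtype.val '' C.supp ∩ box a b n).ncard + m * m := by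
        have := ncard_prod_set_s10 badC badR hbadCfin hbadRfin
        have hle : (badC ×ˢ badR).ncard ≤ m * m := by
          rw [this]; exact Nat.mul_le_mul hbadCcard hbadRcard
        omega

lemma gridBox_eq_box (s : ℕ) : gridBox s = box 0 0 s := by
  simp [gridBox, box]

lemma boxes_disjoint {n : ℕ} (hn : 0 < n) {i j i' j' : ℕ} (hne : (i, j) ≠ (i', j')) :
    Disjoint (box ((i : ℤ) * n) ((j : ℤ) * n) n) (box ((i' : ℤ) * n) ((j' : ℤ) * n) n) := by
  rw [Set.disjoint_left]
  rintro ⟨x, y⟩ h1 h2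
  apply hne
  have hx1 : (i : ℤ) * n + 1 ≤ x ∧ x ≤ (i : ℤ) * n + n := ⟨h1.1.1, h1.1.2⟩
  have hy1 : (j : ℤ) * n + 1 ≤ y ∧ y ≤ (j : ℤ) * n + n := ⟨h1.2.1, h1.2.2⟩
  have hx2 : (i' : ℤ) * n + 1 ≤ x ∧ x ≤ (i' : ℤ) * n + n := ⟨h2.1.1, h2.1.2⟩
  have hy2 : (j' : ℤ) * n + 1 ≤ y ∧ y ≤ (j' : ℤ) * n + n := ⟨h2.2.1, h2.2.2⟩
  have hnpos : (0 : ℤ) < n := by exact_mod_cast hn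
  have key : ∀ u v : ℕ, (u : ℤ) * n + 1 ≤ x → x ≤ (u : ℤ) * n + n →
      (v : ℤ) * n + 1 ≤ x → x ≤ (v : ℤ) * n + n → u = v := by
    intro u v h1 h2 h3 h4
    have huv : (u : ℤ) < (v : ℤ) + 1 := by
      have hmul : (u : ℤ) * n < ((v : ℤ) + 1) * n := by
        have e : ((v : ℤ) + 1) * n = (v : ℤ) * n + n := by ring
        omega
      exact lt_of_mul_lt_mul_right hmul (le_of_lt hnpos)
    have hvu : (v : ℤ) < (u : ℤ) + 1 := by
      have hmul : (v : ℤ) * n < ((u : ℤ) + 1) * n := by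
        have e : ((u : ℤ) + 1) * n = (u : ℤ) * n + n := by ring
        omega
      exact lt_of_mul_lt_mul_right hmul (le_of_lt hnpos)
    omega
  have key2 : ∀ u v : ℕ, (u : ℤ) * n + 1 ≤ y → y ≤ (u : ℤ) * n + n →
      (v : ℤ) * n + 1 ≤ y → y ≤ (v : ℤ) * n + n → u = v := by
    intro u v h1 h2 h3 h4
    have huv : (u : ℤ) < (v : ℤ) + 1 := by
      have hmul : (u : ℤ) * n < ((v : ℤ) + 1) * n := by
        have e : ((v : ℤ) + 1) * n = (v : ℤ) * n + n := by ring
        omega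
      exact lt_of_mul_lt_mul_right hmul (le_of_lt hnpos)
    have hvu : (v : ℤ) < (u : ℤ) + 1 := by
      have hmul : (v : ℤ) * n < ((u : ℤ) + 1) * n := by
        have e : ((u : ℤ) + 1) * n = (u : ℤ) * n + n := by ring
        omega
      exact lt_of_mul_lt_mul_right hmul (le_of_lt hnpos)
    omega
  exact Prod.ext (key i i' hx1.1 hx1.2 hx2.1 hx2.2) (key2 j j' hy1.1 hy1.2 hy2.1 hy2.2)

set_option maxHeartbeats 2000000 in
lemma final_numeric (ε α T N B sR : ℝ) (hε0 : 0 < ε) (hε1 : ε < 1) (hα : 0 < α)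
    (hT1 : 1 ≤ T) (hN1 : 1 ≤ N) (hs1 : 1 ≤ sR) (hB0 : 0 ≤ B)
    (hTN : T * N ≤ sR) (hsTN : sR < T * N + T)
    (h8T : 8 * T ≤ ε * sR) (hTR : 16 * α / ε^2 ≤ T)
    (hbad : B * (ε/4 * N) ≤ α * sR) :
    (1 - ε) * sR^2 ≤ (T * T - B) * (N * N - (ε/4 * N)^2) := by
  have hsT : T ≤ sR := by nlinarith
  have hTs : 2 * T * sR ≤ ε/4 * (sR * sR) := by nlinarith
  have hTNlow : sR - T ≤ T * N := by linarith
  have hTN0 : 0 ≤ T * N := by nlinarith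
  have hT2N2 : sR * sR - 2 * T * sR ≤ (T * N) * (T * N) := by
    have hs'T : 0 ≤ sR - T := by linarith
    have := mul_le_mul hTNlow hTNlow hs'T hTN0
    nlinarith [sq_nonneg T]
  have hbN : B * N * ε ≤ 4 * (α * sR) := by nlinarith
  have hNT : N * (16 * α / ε^2) ≤ sR := by
    have h1 : N * (16 * α / ε^2) ≤ N * T :=
      mul_le_mul_of_nonneg_left hTR (by linarith)
    nlinarith
  have hBNN : B * N * N ≤ ε/4 * (sR * sR) := by
    have hprod : (B * N * ε) * (N * (16 * α / ε^2)) ≤ (4 * (α * sR)) * sR := by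
      refine mul_le_mul hbN hNT (by positivity) (by positivity)
    have e1 : (B * N * ε) * (N * (16 * α / ε^2)) = (B * N * N) * (16 * α / ε) := by
      field_simp
    have e2 : (4 : ℝ) * (α * sR) * sR = (ε/4 * (sR * sR)) * (16 * α / ε) := by
      field_simp
      ring
    rw [e1, e2] at hprod
    have hpos : (0:ℝ) < 16 * α / ε := by positivity
    exact le_of_mul_le_mul_right hprod hpos
  have he2 : (T * T - B) * (N * N - (ε/4 * N)^2)
      = (1 - ε^2/16) * ((T * N) * (T * N)) - B * N * N + (ε^2/16) * (B * (N * N)) := by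
    ring
  have h1 : 0 ≤ (ε^2/16) * (B * (N * N)) := by positivity
  have h2 : (1 - ε^2/16) * (sR * sR - 2 * T * sR) ≤ (1 - ε^2/16) * ((T * N) * (T * N)) :=
    mul_le_mul_of_nonneg_left hT2N2 (by nlinarith)
  have h3 : (T * N) * (T * N) ≤ sR * sR := by nlinarith
  nlinarith

/-- For every `ε ∈ (0,1)` and `α > 0` there are `k = k(ε,α)` and `s₀`
such that for all `s ≥ s₀` and every `H ⊆ {1,…,s}²` with `|H| ≥ s² − αs`, the `k` largest
connected components of the subgraph of the grid induced by `H` together have at least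
`(1−ε)·s²` vertices (equivalently, some at most `k` distinct components have total size at
least `(1−ε)·s²`). Moreover, if `α ≤ ε/2` one may take `k = 1`. -/
theorem boundedly_many_components_cover (ε : ℝ) (hε : ε ∈ Set.Ioo (0 : ℝ) 1)
    (α : ℝ) (hα : 0 < α) :
    ∃ k : ℕ, (α ≤ ε / 2 → k = 1) ∧
      ∃ s₀ : ℕ, ∀ s : ℕ, s₀ ≤ s →
        ∀ H : Set (ℤ × ℤ), H ⊆ gridBox s → (s : ℝ)^2 - α * s ≤ (H.ncard : ℝ) →
          ∃ S : Finset (SimpleGraph.induce H latticeGraph).ConnectedComponent,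
            S.card ≤ k ∧
            (1 - ε) * (s : ℝ)^2 ≤ ∑ C ∈ S, (C.supp.ncard : ℝ) := by
  classical
  obtain ⟨hε0, hε1⟩ := hε
  by_cases hc : α ≤ ε / 2
  · -- single component case
    refine ⟨1, fun _ => rfl, 1, ?_⟩
    intro s hs H hH hcard
    have hs1 : (1 : ℕ) ≤ s := hs
    have hsR : (1 : ℝ) ≤ (s : ℝ) := by exact_mod_cast hs1
    have hgfin : (gridBox s).Finite := (Set.finite_Icc _ _).prod (Set.finite_Icc _ _)
    have hHfin : H.Finite := hgfin.subset hH
    have hgcard : (gridBox s).ncard = s * s := by rw [gridBox_eq_box]; exact box_ncard 0 0 s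
    set m : ℕ := (gridBox s \ H).ncard with hmdef
    have hsum : m + H.ncard = s * s := by
      rw [← hgcard]
      exact Set.ncard_diff_add_ncard_of_subset hH hgfin
    have hmR : (m : ℝ) ≤ α * s := by
      have hcast : (m : ℝ) + (H.ncard : ℝ) = (s : ℝ) * s := by exact_mod_cast hsum
      nlinarith [hcard]
    have hmlt : m < s := by
      have : (m : ℝ) < (s : ℝ) := by nlinarith
      exact_mod_cast this
    have hmlt' : (box 0 0 s \ H).ncard < s := by rw [← gridBox_eq_box]; exact hmlt
    obtain ⟨C, hC⟩ := core_lemma H 0 0 s hmlt'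
    rw [← gridBox_eq_box] at hC
    refine ⟨{C}, by simp, ?_⟩
    rw [Finset.sum_singleton]
    -- |supp C| ≥ the intersection count
    have hsupp_sub : Subtype.val '' C.supp ⊆ H := by
      rintro p ⟨⟨q, hq⟩, _, rfl⟩; exact hq
    have hsuppfin : (Subtype.val '' C.supp).Finite := hHfin.subset hsupp_sub
    have h1 : (Subtype.val '' C.supp ∩ gridBox s).ncard ≤ (Subtype.val '' C.supp).ncard :=
      Set.ncard_le_ncard Set.inter_subset_left hsuppfin
    have h2 : (Subtype.val '' C.supp).ncard = C.supp.ncard :=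
      Set.ncard_image_of_injective _ Subtype.val_injective
    have hCR : (s : ℝ) * s ≤ ((Subtype.val '' C.supp ∩ gridBox s).ncard : ℝ) + (m : ℝ) * m := by
      exact_mod_cast hC
    have hfinal : ((Subtype.val '' C.supp ∩ gridBox s).ncard : ℝ) ≤ (C.supp.ncard : ℝ) := by
      exact_mod_cast h1.trans h2.le
    have hmm : (m : ℝ) * m ≤ (ε * s / 2) * (ε * s / 2) := by
      have hm2 : (m : ℝ) ≤ ε * s / 2 := by nlinarith
      have hm0 : (0 : ℝ) ≤ m := Nat.cast_nonneg m
      nlinarith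
    nlinarith
  · -- many components case
    set t : ℕ := max 1 ⌈16 * α / ε ^ 2⌉₊ with htdef
    have ht1 : 1 ≤ t := le_max_left _ _
    have htR : 16 * α / ε ^ 2 ≤ (t : ℝ) := by
      refine le_trans (Nat.le_ceil _) ?_
      have := Nat.cast_le (α := ℝ).mpr (le_max_right 1 ⌈16 * α / ε ^ 2⌉₊)
      simpa [htdef] using this
    refine ⟨t ^ 2, fun h => absurd h hc, t * ⌈8 / ε⌉₊ + t + ⌈α⌉₊ + 1, ?_⟩
    intro s hs H hH hcard
    -- basic quantities
    have hgfin : (gridBox s).Finite := (Set.finite_Icc _ _).prod (Set.finite_Icc _ _)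
    have hHfin : H.Finite := hgfin.subset hH
    haveI : Finite H := hHfin.to_subtype
    have hgcard : (gridBox s).ncard = s * s := by rw [gridBox_eq_box]; exact box_ncard 0 0 s
    set m : ℕ := (gridBox s \ H).ncard with hmdef
    have hsum : m + H.ncard = s * s := by
      rw [← hgcard]
      exact Set.ncard_diff_add_ncard_of_subset hH hgfin
    have hts : t ≤ s := by omega
    have hs1 : (1:ℕ) ≤ s := by omega
    have hsR : (1:ℝ) ≤ (s:ℝ) := by exact_mod_cast hs1
    have htRpos : (1:ℝ) ≤ (t:ℝ) := by exact_mod_cast ht1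
    have hmR : (m : ℝ) ≤ α * s := by
      have hcast : (m : ℝ) + (H.ncard : ℝ) = (s : ℝ) * s := by exact_mod_cast hsum
      nlinarith [hcard]
    -- n and its properties
    set n : ℕ := s / t with hndef
    have htpos : 0 < t := ht1
    have hn1 : 1 ≤ n := (Nat.one_le_div_iff htpos).mpr hts
    have htn : t * n ≤ s := by rw [hndef]; exact Nat.mul_div_le s t
    have hstn : s < t * n + t := by
      have h := Nat.div_add_mod s t
      rw [← hndef] at h
      have h2 := Nat.mod_lt s htpos
      omega
    have hnR : (1:ℝ) ≤ (n:ℝ) := by exact_mod_cast hn1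
    have htnR : (t:ℝ) * n ≤ (s:ℝ) := by exact_mod_cast htn
    have hstnR : (s:ℝ) < (t:ℝ) * n + t := by exact_mod_cast hstn
    -- 8T ≤ ε s
    have hceil8 : 8/ε ≤ (⌈8/ε⌉₊ : ℝ) := Nat.le_ceil _
    have hTc : (t:ℝ) * (⌈8/ε⌉₊:ℝ) ≤ (s:ℝ) := by
      have : t * ⌈8/ε⌉₊ ≤ s := by omega
      exact_mod_cast this
    have h8T : 8 * (t:ℝ) ≤ ε * s := by
      have h1 : (t:ℝ) * (8/ε) ≤ (t:ℝ) * (⌈8/ε⌉₊:ℝ) :=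
        mul_le_mul_of_nonneg_left hceil8 (by positivity)
      have h2 : (t:ℝ) * (8/ε) ≤ (s:ℝ) := h1.trans hTc
      have h3 : ε * ((t:ℝ) * (8/ε)) ≤ ε * s := mul_le_mul_of_nonneg_left h2 (le_of_lt hε0)
      have e : ε * ((t:ℝ) * (8/ε)) = 8 * (t:ℝ) := by field_simp
      linarith [e ▸ h3]
    -- H nonempty
    have hαs : α < (s:ℝ) := by
      have : (⌈α⌉₊ : ℝ) < s := by exact_mod_cast (by omega : ⌈α⌉₊ < s)
      linarith [Nat.le_ceil α]
    have hHne : H.Nonempty := by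
      rw [Set.nonempty_iff_ne_empty]
      intro hemp
      rw [hemp] at hcard
      simp only [Set.ncard_empty, Nat.cast_zero] at hcard
      nlinarith
    obtain ⟨v, hv⟩ := hHne
    haveI hCompNe : Nonempty (SimpleGraph.induce H latticeGraph).ConnectedComponent :=
      ⟨(SimpleGraph.induce H latticeGraph).connectedComponentMk ⟨v, hv⟩⟩
    -- blocks
    set P : Finset (ℕ × ℕ) := Finset.range t ×ˢ Finset.range t with hPdef
    set Bf : ℕ × ℕ → Set (ℤ × ℤ) := fun ij => box ((ij.1 : ℤ) * n) ((ij.2 : ℤ) * n) n with hBfdef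
    set mf : ℕ × ℕ → ℕ := fun ij => (Bf ij \ H).ncard with hmfdef
    have hBsub : ∀ ij ∈ P, Bf ij ⊆ gridBox s := by
      rintro ⟨i, j⟩ hij p hp
      simp only [hPdef, Finset.mem_product, Finset.mem_range] at hij
      obtain ⟨hi, hj⟩ := hij
      simp only [hBfdef, box, Set.mem_prod, Set.mem_Icc] at hp
      obtain ⟨⟨hx1, hx2⟩, ⟨hy1, hy2⟩⟩ := hp
      have hi1 : ((i:ℤ) + 1) * n ≤ (t:ℤ) * n := by
        have : (i:ℤ) + 1 ≤ t := by exact_mod_cast hi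
        exact mul_le_mul_of_nonneg_right this (by positivity)
      have hj1 : ((j:ℤ) + 1) * n ≤ (t:ℤ) * n := by
        have : (j:ℤ) + 1 ≤ t := by exact_mod_cast hj
        exact mul_le_mul_of_nonneg_right this (by positivity)
      have htns : (t:ℤ) * n ≤ s := by exact_mod_cast htn
      have hi0 : (0:ℤ) ≤ (i:ℤ) * n := by positivity
      have hj0 : (0:ℤ) ≤ (j:ℤ) * n := by positivity
      have ei : ((i:ℤ) + 1) * n = (i:ℤ) * n + n := by ring
      have ej : ((j:ℤ) + 1) * n = (j:ℤ) * n + n := by ring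
      refine ⟨⟨by linarith, by linarith⟩, ⟨by linarith, by linarith⟩⟩
    have hBdisj : ∀ ij ∈ P, ∀ kl ∈ P, ij ≠ kl → Disjoint (Bf ij) (Bf kl) := by
      rintro ⟨i, j⟩ _ ⟨k, l⟩ _ hne
      exact boxes_disjoint hn1 hne
    -- total missing over blocks
    have hsum_m : ∑ ij ∈ P, mf ij ≤ m := by
      refine sum_ncard_le_ncard P (fun ij => Bf ij \ H) (gridBox s \ H)
        (hgfin.subset Set.diff_subset) ?_ ?_
      · intro ij hij
        exact Set.diff_subset_diff_left (hBsub ij hij)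
      · intro ij hij kl hkl hne
        exact (hBdisj ij hij kl hkl hne).mono Set.diff_subset Set.diff_subset
    -- good and bad blocks
    set GB : Finset (ℕ × ℕ) := P.filter (fun ij => ((mf ij : ℝ) ≤ ε/4 * n)) with hGBdef
    set bad : Finset (ℕ × ℕ) := P.filter (fun ij => ¬((mf ij : ℝ) ≤ ε/4 * n)) with hbaddef
    have hcards : GB.card + bad.card = t * t := by
      rw [hGBdef, hbaddef, Finset.card_filter_add_card_filter_not, hPdef,
        Finset.card_product, Finset.card_range]
    have hbadC : (bad.card : ℝ) * (ε/4 * n) ≤ (m : ℝ) := by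
      have h1 : ∑ _ij ∈ bad, (ε/4 * (n:ℝ)) ≤ ∑ ij ∈ bad, (mf ij : ℝ) := by
        refine Finset.sum_le_sum ?_
        intro ij hij
        have := (Finset.mem_filter.mp hij).2
        push_neg at this
        exact le_of_lt this
      have h2 : ∑ ij ∈ bad, (mf ij : ℝ) ≤ ∑ ij ∈ P, (mf ij : ℝ) := by
        refine Finset.sum_le_sum_of_subset_of_nonneg (Finset.filter_subset _ _) ?_
        intro ij _ _
        positivity
      have h3 : ∑ ij ∈ P, (mf ij : ℝ) ≤ (m : ℝ) := by exact_mod_cast hsum_m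
      have h4 : ∑ _ij ∈ bad, (ε/4 * (n:ℝ)) = (bad.card : ℝ) * (ε/4 * n) := by
        rw [Finset.sum_const, nsmul_eq_mul]
      linarith
    -- choose components for good blocks
    have hex : ∀ ij : ℕ × ℕ, ∃ C : (SimpleGraph.induce H latticeGraph).ConnectedComponent,
        ij ∈ GB → n * n ≤ (Subtype.val '' C.supp ∩ Bf ij).ncard + mf ij * mf ij := by
      intro ij
      by_cases hij : ij ∈ GB
      · have hle : (mf ij : ℝ) ≤ ε/4 * n := (Finset.mem_filter.mp hij).2
        have hlt : mf ij < n := by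
          have : (mf ij : ℝ) < (n : ℝ) := by nlinarith
          exact_mod_cast this
        obtain ⟨C, hC⟩ := core_lemma H ((ij.1 : ℤ) * n) ((ij.2 : ℤ) * n) n hlt
        exact ⟨C, fun _ => hC⟩
      · exact ⟨Classical.arbitrary _, fun h => absurd h hij⟩
    choose f hf using hex
    refine ⟨GB.image f, ?_, ?_⟩
    · calc (GB.image f).card ≤ GB.card := Finset.card_image_le
        _ ≤ P.card := Finset.card_filter_le _ _
        _ = t * t := by rw [hPdef, Finset.card_product, Finset.card_range]
        _ = t ^ 2 := by ring
    -- the sum bound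
    have hsupp_fin : ∀ C : (SimpleGraph.induce H latticeGraph).ConnectedComponent,
        (Subtype.val '' C.supp).Finite := by
      intro C
      refine hHfin.subset ?_
      rintro p ⟨⟨q, hq⟩, _, rfl⟩; exact hq
    -- fiberwise
    have hfiber : ∑ C ∈ GB.image f, ∑ ij ∈ GB.filter (fun ij => f ij = C),
          ((Subtype.val '' (f ij).supp ∩ Bf ij).ncard : ℝ)
        = ∑ ij ∈ GB, ((Subtype.val '' (f ij).supp ∩ Bf ij).ncard : ℝ) :=
      Finset.sum_fiberwise_of_maps_to (fun ij hij => Finset.mem_image_of_mem f hij) _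
    have hperC : ∀ C ∈ GB.image f,
        ∑ ij ∈ GB.filter (fun ij => f ij = C),
          ((Subtype.val '' (f ij).supp ∩ Bf ij).ncard : ℝ) ≤ (C.supp.ncard : ℝ) := by
      intro C _
      have hnat : ∑ ij ∈ GB.filter (fun ij => f ij = C),
          (Subtype.val '' (f ij).supp ∩ Bf ij).ncard ≤ (Subtype.val '' C.supp).ncard := by
        refine sum_ncard_le_ncard _ (fun ij => Subtype.val '' (f ij).supp ∩ Bf ij)
          (Subtype.val '' C.supp) (hsupp_fin C) ?_ ?_
        · intro ij hij
          have hfC : f ij = C := (Finset.mem_filter.mp hij).2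
          rw [← hfC]
          exact Set.inter_subset_left
        · intro ij hij kl hkl hne
          have hijP : ij ∈ P := Finset.filter_subset _ _ ((Finset.filter_subset _ _) hij)
          have hklP : kl ∈ P := Finset.filter_subset _ _ ((Finset.filter_subset _ _) hkl)
          exact (hBdisj ij hijP kl hklP hne).mono Set.inter_subset_right Set.inter_subset_right
      have himg : (Subtype.val '' C.supp).ncard = C.supp.ncard :=
        Set.ncard_image_of_injective _ Subtype.val_injective
      calc ∑ ij ∈ GB.filter (fun ij => f ij = C),
            ((Subtype.val '' (f ij).supp ∩ Bf ij).ncard : ℝ)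
          = ((∑ ij ∈ GB.filter (fun ij => f ij = C),
              (Subtype.val '' (f ij).supp ∩ Bf ij).ncard : ℕ) : ℝ) := by push_cast; rfl
        _ ≤ ((Subtype.val '' C.supp).ncard : ℝ) := by exact_mod_cast hnat
        _ = (C.supp.ncard : ℝ) := by rw [himg]
    have hstep1 : ∑ ij ∈ GB, ((Subtype.val '' (f ij).supp ∩ Bf ij).ncard : ℝ)
        ≤ ∑ C ∈ GB.image f, (C.supp.ncard : ℝ) := by
      rw [← hfiber]
      exact Finset.sum_le_sum hperC
    -- per-block lower bound
    have hstep2 : (GB.card : ℝ) * ((n:ℝ) * n - (ε/4 * n)^2)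
        ≤ ∑ ij ∈ GB, ((Subtype.val '' (f ij).supp ∩ Bf ij).ncard : ℝ) := by
      have : ∑ _ij ∈ GB, ((n:ℝ) * n - (ε/4 * n)^2)
          ≤ ∑ ij ∈ GB, ((Subtype.val '' (f ij).supp ∩ Bf ij).ncard : ℝ) := by
        refine Finset.sum_le_sum ?_
        intro ij hij
        have h1 := hf ij hij
        have hle : (mf ij : ℝ) ≤ ε/4 * n := (Finset.mem_filter.mp hij).2
        have h2 : ((n:ℕ) * n : ℝ) ≤ ((Subtype.val '' (f ij).supp ∩ Bf ij).ncard : ℝ)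
            + (mf ij : ℝ) * (mf ij : ℝ) := by exact_mod_cast h1
        have hm0 : (0:ℝ) ≤ (mf ij : ℝ) := Nat.cast_nonneg _
        push_cast at h2
        nlinarith
      rw [Finset.sum_const, nsmul_eq_mul] at this
      exact this
    -- final numeric computation
    have hGBcard : (GB.card : ℝ) = (t:ℝ) * t - (bad.card:ℝ) := by
      have hc2 : (GB.card:ℝ) + (bad.card:ℝ) = (t:ℝ) * (t:ℝ) := by exact_mod_cast hcards
      linarith
    have hbad2 : (bad.card:ℝ) * (ε/4 * (n:ℝ)) ≤ α * s := le_trans hbadC hmR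
    have hfinal := final_numeric ε α (t:ℝ) (n:ℝ) (bad.card:ℝ) (s:ℝ) hε0 hε1 hα
      htRpos hnR hsR (Nat.cast_nonneg _) htnR hstnR h8T htR hbad2
    -- put it together
    have hchain : (1 - ε) * (s:ℝ)^2 ≤ ∑ C ∈ GB.image f, (C.supp.ncard : ℝ) := by
      calc (1 - ε) * (s:ℝ)^2
          ≤ ((t:ℝ) * t - (bad.card:ℝ)) * ((n:ℝ) * n - (ε/4 * (n:ℝ))^2) := hfinal
        _ = (GB.card : ℝ) * ((n:ℝ) * n - (ε/4 * n)^2) := by rw [hGBcard]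
        _ ≤ ∑ ij ∈ GB, ((Subtype.val '' (f ij).supp ∩ Bf ij).ncard : ℝ) := hstep2
        _ ≤ ∑ C ∈ GB.image f, (C.supp.ncard : ℝ) := hstep1
    exact hchain


end
end
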